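/- arXiv:0906.5573 — 7 statements merged into one kernel-verified Lean document; each statement's English description precedes it below -/
import Mathlib

section
/- The generating function over pairs of nonnegative integers (λ_1, λ_2) satisfying 2λ_1 ≥ λ_2 and 2λ_2 ≥ λ_1 is ∑ x^{λ_1} y^{λ_2} = (1 + xy + x^2 y^2)/((1 - x y^2)(1 - x^2 y)), as formal power series in x and y. -/
open MvPowerSeries

/-- The generating function `∑ x^{λ₁} y^{λ₂}` over pairs `(λ₁, λ₂)` of nonnegative
integers with `2λ₁ ≥ λ₂` and `2λ₂ ≥ λ₁`, as a formal power series in `x = X 0`,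
`y = X 1`: its coefficient on `x^{λ₁} y^{λ₂}` is 1 when the constraints hold, else 0. -/
noncomputable def putnamGF : MvPowerSeries (Fin 2) ℤ :=
  fun d => if d 1 ≤ 2 * d 0 ∧ d 0 ≤ 2 * d 1 then 1 else 0

lemma mon_aux (a b : ℕ) : (X 0 : MvPowerSeries (Fin 2) ℤ) ^ a * X 1 ^ b =
    monomial (Finsupp.single 0 a + Finsupp.single 1 b) 1 := by
  rw [X_pow_eq, X_pow_eq, monomial_mul_monomial, one_mul]

lemma le2_aux (n d : Fin 2 →₀ ℕ) : n ≤ d ↔ n 0 ≤ d 0 ∧ n 1 ≤ d 1 := by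
  rw [Finsupp.le_def, Fin.forall_fin_two]

lemma eq2_aux (n d : Fin 2 →₀ ℕ) : d = n ↔ d 0 = n 0 ∧ d 1 = n 1 := by
  rw [Finsupp.ext_iff, Fin.forall_fin_two]

lemma coeffG_aux (d : Fin 2 →₀ ℕ) :
    coeff d putnamGF = if d 1 ≤ 2 * d 0 ∧ d 0 ≤ 2 * d 1 then 1 else 0 := rfl

lemma expand_aux {R : Type*} [CommRing R] (G A B : R) :
    G * ((1 - A) * (1 - B)) = G - G * A - G * B + G * (A * B) := by ring

set_option maxHeartbeats 1000000 in
/-- `∑ x^{λ₁}y^{λ₂} = (1 + xy + x²y²) / ((1 - xy²)(1 - x²y))`,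
stated with denominators cleared. -/
theorem stmt_2 :
    putnamGF * ((1 - MvPowerSeries.X 0 * MvPowerSeries.X 1 ^ 2) *
        (1 - MvPowerSeries.X 0 ^ 2 * MvPowerSeries.X 1)) =
      1 + MvPowerSeries.X 0 * MvPowerSeries.X 1 +
        (MvPowerSeries.X 0 : MvPowerSeries (Fin 2) ℤ) ^ 2 * MvPowerSeries.X 1 ^ 2 := by
  have hA : (X 0 : MvPowerSeries (Fin 2) ℤ) * X 1 ^ 2 =
      monomial (Finsupp.single 0 1 + Finsupp.single 1 2) 1 := by
    rw [← pow_one (X 0 : MvPowerSeries (Fin 2) ℤ), mon_aux]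
  have hB : (X 0 : MvPowerSeries (Fin 2) ℤ) ^ 2 * X 1 =
      monomial (Finsupp.single 0 2 + Finsupp.single 1 1) 1 := by
    rw [← pow_one (X 1 : MvPowerSeries (Fin 2) ℤ), mon_aux]
  have hC : (X 0 : MvPowerSeries (Fin 2) ℤ) * X 1 =
      monomial (Finsupp.single 0 1 + Finsupp.single 1 1) 1 := by
    rw [← pow_one (X 0 : MvPowerSeries (Fin 2) ℤ),
      ← pow_one (X 1 : MvPowerSeries (Fin 2) ℤ), mon_aux]
  rw [expand_aux, hA, hB, hC, mon_aux, monomial_mul_monomial, one_mul]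
  ext d
  simp only [map_add, map_sub, coeff_mul_monomial, mul_one, coeff_monomial, coeff_one,
    coeffG_aux, le2_aux, eq2_aux, Finsupp.tsub_apply, Finsupp.add_apply, Finsupp.single_apply,
    Finsupp.coe_zero, Pi.zero_apply]
  norm_num
  split_ifs <;> omega
end

section
/- Every pair (λ_1, λ_2) of nonnegative integers satisfying 2λ_1 ≥ λ_2 and 2λ_2 ≥ λ_1 can be written uniquely as (λ_1, λ_2) = c_1·(1,2) + c_2·(2,1) + p, where c_1, c_2 are nonnegative integers and p ∈ {(0,0), (1,1), (2,2)}. -/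
/-- Every pair `(λ₁, λ₂)` of nonnegative integers with `2λ₁ ≥ λ₂` and `2λ₂ ≥ λ₁`
is uniquely `(λ₁, λ₂) = c₁·(1,2) + c₂·(2,1) + (k,k)` with `c₁, c₂ ∈ ℤ_{≥0}` and
`k ∈ {0, 1, 2}`. -/
theorem stmt_3 (l1 l2 : ℕ) (h1 : l2 ≤ 2 * l1) (h2 : l1 ≤ 2 * l2) :
    ∃! t : ℕ × ℕ × ℕ, t.2.2 ≤ 2 ∧
      l1 = t.1 * 1 + t.2.1 * 2 + t.2.2 ∧
      l2 = t.1 * 2 + t.2.1 * 1 + t.2.2 := by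
  refine ⟨⟨(2*l2 - l1)/3, (2*l1 - l2)/3, (2*l2 - l1) % 3⟩, ?_, ?_⟩
  · refine ⟨?_, ?_, ?_⟩ <;> simp only <;> omega
  · rintro ⟨a, b, c⟩ ⟨hc, e1, e2⟩
    simp only [Prod.mk.injEq] at *
    omega
end

section
/- The Carlitz q-Eulerian polynomial satisfies C_n(x,q) = ((x;q)_{n+1}/(1-q)^n) · ∑_{i=0}^n binom(n,i) (-q)^i/(1 - q^i x), where (x;q)_{n+1} = ∏_{i=0}^{n}(1 - x q^i). -/
/-- The value `π(k+1)` (1-indexed) of a permutation of `{1, …, n}` realized as a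
permutation of `Fin n`, read 0-indexed: `permVal n π k = π(k+1) - 1`. -/
def permVal (n : ℕ) (π : Equiv.Perm (Fin n)) (k : ℕ) : ℕ :=
  if h : k < n then (π ⟨k, h⟩ : ℕ) else k

/-- The descent set `D_π = {j ∈ {1, …, n-1} : π(j) > π(j+1)}`. -/
def descSet (n : ℕ) (π : Equiv.Perm (Fin n)) : Finset ℕ :=
  (Finset.Icc 1 (n - 1)).filter fun j => permVal n π j < permVal n π (j - 1)

/-- The major index `maj(π) = ∑_{j ∈ D_π} j`. -/
def maj (n : ℕ) (π : Equiv.Perm (Fin n)) : ℕ := ∑ j ∈ descSet n π, j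

/-- The number of descents `des(π) = |D_π|`. -/
def des (n : ℕ) (π : Equiv.Perm (Fin n)) : ℕ := (descSet n π).card

open Finset


/-- insertion of the max value `n` at position `p`. -/
def ins {n : ℕ} (π : Equiv.Perm (Fin n)) (p : Fin (n+1)) : Equiv.Perm (Fin (n+1)) :=
  (finSuccEquiv' p).trans ((Equiv.optionCongr π).trans (finSuccEquiv' (Fin.last n)).symm)

lemma ins_apply_self {n : ℕ} (π : Equiv.Perm (Fin n)) (p : Fin (n+1)) :
    ins π p p = Fin.last n := by
  simp [ins, finSuccEquiv'_at, finSuccEquiv'_symm_none]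

lemma ins_apply_succAbove {n : ℕ} (π : Equiv.Perm (Fin n)) (p : Fin (n+1)) (j : Fin n) :
    ins π p (p.succAbove j) = (π j).castSucc := by
  simp [ins, finSuccEquiv'_succAbove, finSuccEquiv'_symm_some, Fin.succAbove_last]

lemma permVal_lt {n : ℕ} (π : Equiv.Perm (Fin n)) {i : ℕ} (h : i < n) :
    permVal n π i < n := by
  rw [permVal, dif_pos h]; exact (π ⟨i, h⟩).isLt

lemma ins_word_lt {n : ℕ} (π : Equiv.Perm (Fin n)) (p : Fin (n+1)) {i : ℕ}
    (h : i < (p : ℕ)) : permVal (n+1) (ins π p) i = permVal n π i := by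
  have hin : i < n := lt_of_lt_of_le (lt_of_lt_of_le h (Nat.lt_succ_iff.mp p.isLt)) le_rfl
  have h1 : i < n + 1 := Nat.lt_succ_of_lt hin
  have : (⟨i, h1⟩ : Fin (n+1)) = p.succAbove ⟨i, hin⟩ := by
    rw [Fin.succAbove_of_castSucc_lt]
    · rfl
    · exact h
  rw [permVal, dif_pos h1, this, ins_apply_succAbove, permVal, dif_pos hin]
  rfl

lemma ins_word_self {n : ℕ} (π : Equiv.Perm (Fin n)) (p : Fin (n+1)) :
    permVal (n+1) (ins π p) (p : ℕ) = n := by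
  rw [permVal, dif_pos p.isLt]
  have : (⟨(p:ℕ), p.isLt⟩ : Fin (n+1)) = p := rfl
  rw [this, ins_apply_self]; rfl

lemma ins_word_gt {n : ℕ} (π : Equiv.Perm (Fin n)) (p : Fin (n+1)) {i : ℕ}
    (h1 : (p : ℕ) < i) (h2 : i ≤ n) : permVal (n+1) (ins π p) i = permVal n π (i-1) := by
  have hi : i < n + 1 := Nat.lt_succ_of_le h2
  have hi1 : i - 1 < n := by omega
  have : (⟨i, hi⟩ : Fin (n+1)) = p.succAbove ⟨i-1, hi1⟩ := by
    rw [Fin.succAbove_of_le_castSucc]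
    · ext; simp [Fin.val_succ]; omega
    · rw [Fin.le_castSucc_iff]
      simp only [Fin.lt_def, Fin.val_succ]
      omega
  rw [permVal, dif_pos hi, this, ins_apply_succAbove, permVal, dif_pos hi1]
  rfl

-- b2 appended to a.lean
lemma mem_descSet {n : ℕ} (π : Equiv.Perm (Fin n)) (j : ℕ) :
    j ∈ descSet n π ↔ 1 ≤ j ∧ j ≤ n - 1 ∧ permVal n π j < permVal n π (j-1) := by
  simp [descSet, Finset.mem_filter, Finset.mem_Icc, and_assoc]

lemma descSet_ins {n : ℕ} (π : Equiv.Perm (Fin n)) (p : Fin (n+1)) :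
    descSet (n+1) (ins π p) =
      ((descSet n π).filter (fun j => j < (p:ℕ)) ∪
        (if (p:ℕ) < n then {(p:ℕ)+1} else ∅)) ∪
        ((descSet n π).filter (fun j => (p:ℕ) < j)).image (· + 1) := by
  have hp : (p : ℕ) ≤ n := Nat.lt_succ_iff.mp p.isLt
  ext j
  simp only [Finset.mem_union, Finset.mem_filter, Finset.mem_image, mem_descSet]
  constructor
  · rintro ⟨h1, h2, h3⟩
    have h2' : j ≤ n := by omega
    rcases lt_trichotomy j (p:ℕ) with hc | hc | hc
    · left; left
      rw [ins_word_lt π p hc, ins_word_lt π p (by omega)] at h3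
      exact ⟨⟨h1, by omega, h3⟩, hc⟩
    · exfalso
      rw [hc, ins_word_self] at h3
      have := permVal_lt π (show (p:ℕ)-1 < n by omega)
      rw [ins_word_lt π p (by omega)] at h3
      omega
    · rcases Nat.lt_or_ge ((p:ℕ)+1) j with hc2 | hc2
      · right
        refine ⟨j - 1, ⟨⟨by omega, by omega, ?_⟩, by omega⟩, by omega⟩
        rw [ins_word_gt π p hc h2', ins_word_gt π p (by omega) (by omega)] at h3
        have e1 : j - 1 - 1 = j - 2 := by omega
        rw [e1] at h3
        have e2 : j - 1 - 1 = j - 2 := by omega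
        rw [e2]
        exact h3
      · left; right
        have hj : j = (p:ℕ)+1 := by omega
        have hpn : (p:ℕ) < n := by omega
        simp [if_pos hpn, hj]
  · rintro ((⟨⟨h1, h2, h3⟩, hc⟩ | hmem) | ⟨j', ⟨⟨h1, h2, h3⟩, hc⟩, rfl⟩)
    · refine ⟨h1, by omega, ?_⟩
      rw [ins_word_lt π p hc, ins_word_lt π p (by omega)]
      exact h3
    · have hpn : (p:ℕ) < n := by
        by_contra h; simp [h] at hmem
      rw [if_pos hpn, Finset.mem_singleton] at hmem
      subst hmem
      refine ⟨by omega, by omega, ?_⟩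
      have e1 : (p:ℕ) + 1 - 1 = (p:ℕ) := by omega
      rw [e1, ins_word_self, ins_word_gt π p (by omega) (by omega)]
      have e2 : (p:ℕ) + 1 - 1 = (p:ℕ) := by omega
      rw [e2]
      exact permVal_lt π hpn
    · refine ⟨by omega, by omega, ?_⟩
      rw [ins_word_gt π p (by omega) (by omega), ins_word_gt π p (by omega) (by omega)]
      have e1 : j' + 1 - 1 = j' := by omega
      rw [e1]
      exact h3

-- part d: statistics
lemma finset_tri (s : Finset ℕ) (p : ℕ) :
    s.card = (s.filter (fun j => j < p)).card + ((if p ∈ s then 1 else 0) +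
      (s.filter (fun j => p < j)).card) ∧
    ∑ j ∈ s, j = ∑ j ∈ s.filter (fun j => j < p), j + ((if p ∈ s then p else 0) +
      ∑ j ∈ s.filter (fun j => p < j), j) := by
  have hu : s = (s.filter (fun j => j < p) ∪ s.filter (fun j => j = p)) ∪
      s.filter (fun j => p < j) := by
    ext j
    simp only [Finset.mem_union, Finset.mem_filter]
    constructor
    · intro h
      rcases lt_trichotomy j p with h1 | h1 | h1
      · exact Or.inl (Or.inl ⟨h, h1⟩)
      · exact Or.inl (Or.inr ⟨h, h1⟩)
      · exact Or.inr ⟨h, h1⟩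
    · rintro ((⟨h, _⟩ | ⟨h, _⟩) | ⟨h, _⟩) <;> exact h
  have hd1 : Disjoint (s.filter (fun j => j < p)) (s.filter (fun j => j = p)) := by
    rw [Finset.disjoint_left]
    intro a ha hb
    simp only [Finset.mem_filter] at ha hb
    omega
  have hd2 : Disjoint (s.filter (fun j => j < p) ∪ s.filter (fun j => j = p))
      (s.filter (fun j => p < j)) := by
    rw [Finset.disjoint_left]
    intro a ha hb
    simp only [Finset.mem_union, Finset.mem_filter] at ha hb
    omega
  have he : s.filter (fun j => j = p) = if p ∈ s then {p} else ∅ := Finset.filter_eq' s p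
  constructor
  · conv_lhs => rw [hu]
    rw [Finset.card_union_of_disjoint hd2, Finset.card_union_of_disjoint hd1, he]
    split_ifs <;> simp <;> omega
  · conv_lhs => rw [hu]
    rw [Finset.sum_union hd2, Finset.sum_union hd1, he]
    split_ifs <;> simp <;> omega

/-- number of descents of `π` greater than `p` -/
def dgt (n : ℕ) (π : Equiv.Perm (Fin n)) (p : ℕ) : ℕ :=
  ((descSet n π).filter (fun j => p < j)).card

/-- the increment of `maj` when the max is inserted at slot `p` -/
def inc (n : ℕ) (π : Equiv.Perm (Fin n)) (p : ℕ) : ℕ :=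
  if p = n then 0
  else if p ∈ descSet n π then 1 + dgt n π p
  else p + 1 + dgt n π p

lemma des_maj_ins {n : ℕ} (π : Equiv.Perm (Fin n)) (p : Fin (n+1)) :
    des (n+1) (ins π p) = ((descSet n π).filter (fun j => j < (p:ℕ))).card +
      ((if (p:ℕ) < n then 1 else 0) + dgt n π p) ∧
    maj (n+1) (ins π p) = (∑ j ∈ (descSet n π).filter (fun j => j < (p:ℕ)), j) +
      ((if (p:ℕ) < n then (p:ℕ)+1 else 0) +
        ((∑ j ∈ (descSet n π).filter (fun j => (p:ℕ) < j), j) + dgt n π p)) := by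
  have hd1 : Disjoint ((descSet n π).filter (fun j => j < (p:ℕ)))
      (if (p:ℕ) < n then ({(p:ℕ)+1} : Finset ℕ) else ∅) := by
    rw [Finset.disjoint_left]
    intro a ha hb
    simp only [Finset.mem_filter] at ha
    split_ifs at hb with h
    · simp only [Finset.mem_singleton] at hb; omega
    · simp at hb
  have hd2 : Disjoint (((descSet n π).filter (fun j => j < (p:ℕ))) ∪
      (if (p:ℕ) < n then ({(p:ℕ)+1} : Finset ℕ) else ∅))
      (((descSet n π).filter (fun j => (p:ℕ) < j)).image (· + 1)) := by
    rw [Finset.disjoint_left]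
    intro a ha hb
    simp only [Finset.mem_union, Finset.mem_filter, Finset.mem_image] at ha hb
    obtain ⟨b, ⟨_, hb2⟩, rfl⟩ := hb
    rcases ha with ⟨_, h⟩ | h
    · omega
    · split_ifs at h with hc
      · simp only [Finset.mem_singleton] at h; omega
      · simp at h
  have hinj : Set.InjOn (· + 1) ((descSet n π).filter (fun j => (p:ℕ) < j)) := by
    intro a _ b _ h; simpa using h
  constructor
  · rw [des, descSet_ins, Finset.card_union_of_disjoint hd2,
      Finset.card_union_of_disjoint hd1, Finset.card_image_of_injOn hinj, dgt]
    split_ifs <;> simp <;> omega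
  · rw [maj, descSet_ins, Finset.sum_union hd2, Finset.sum_union hd1,
      Finset.sum_image hinj, dgt]
    rw [Finset.sum_add_distrib, Finset.sum_const, smul_eq_mul, mul_one]
    split_ifs <;> simp <;> omega

-- part e: inc facts
lemma tri_d {n : ℕ} (π : Equiv.Perm (Fin n)) (p : ℕ) :
    des n π = ((descSet n π).filter (fun j => j < p)).card +
      ((if p ∈ descSet n π then 1 else 0) + dgt n π p) :=
  (finset_tri (descSet n π) p).1

lemma dlt_le {n : ℕ} (π : Equiv.Perm (Fin n)) (p : ℕ) :
    ((descSet n π).filter (fun j => j < p)).card ≤ p := by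
  have : (descSet n π).filter (fun j => j < p) ⊆ Finset.range p := by
    intro j hj
    simp only [Finset.mem_filter] at hj
    exact Finset.mem_range.mpr hj.2
  simpa using Finset.card_le_card this

lemma dgt_le {n : ℕ} (π : Equiv.Perm (Fin n)) (p : ℕ) :
    dgt n π p ≤ (n-1) - p := by
  have : (descSet n π).filter (fun j => p < j) ⊆ Finset.Icc (p+1) (n-1) := by
    intro j hj
    simp only [Finset.mem_filter, mem_descSet] at hj
    simp only [Finset.mem_Icc]
    omega
  have := Finset.card_le_card this
  rw [Nat.card_Icc] at this
  rw [dgt]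
  omega

lemma fact1 {n : ℕ} (π : Equiv.Perm (Fin n)) {p : ℕ} (h : p ∈ descSet n π) :
    1 + dgt n π p ≤ des n π := by
  have := tri_d π p
  rw [if_pos h] at this
  omega

lemma fact2 {n : ℕ} (π : Equiv.Perm (Fin n)) {p : ℕ} (h : p ∉ descSet n π) :
    des n π ≤ p + dgt n π p := by
  have h1 := tri_d π p
  rw [if_neg h] at h1
  have h2 := dlt_le π p
  omega

lemma descSet_mem_lt {n : ℕ} (π : Equiv.Perm (Fin n)) {p : ℕ} (h : p ∈ descSet n π) :
    1 ≤ p ∧ p ≤ n - 1 ∧ p < n := by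
  rw [mem_descSet] at h
  omega

lemma maj_ins {n : ℕ} (π : Equiv.Perm (Fin n)) (p : Fin (n+1)) :
    maj (n+1) (ins π p) = maj n π + inc n π (p:ℕ) := by
  have h1 := (des_maj_ins π p).2
  have h2 := (finset_tri (descSet n π) (p:ℕ)).2
  have hp : (p:ℕ) ≤ n := Nat.lt_succ_iff.mp p.isLt
  have hm : maj n π = ∑ j ∈ descSet n π, j := rfl
  rw [inc]
  by_cases hn : (p:ℕ) = n
  · have hempty : (descSet n π).filter (fun j => (p:ℕ) < j) = ∅ := by
      rw [Finset.eq_empty_iff_forall_notMem]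
      intro j hj
      simp only [Finset.mem_filter, mem_descSet] at hj
      omega
    have hnd : (p:ℕ) ∉ descSet n π := by
      rw [mem_descSet]; omega
    rw [if_pos hn]
    rw [hempty] at h1
    rw [if_neg hnd, hempty] at h2
    have hlt : ¬ ((p:ℕ) < n) := by omega
    rw [if_neg hlt] at h1
    simp only [Finset.sum_empty, Finset.card_empty] at h1 h2
    have : dgt n π (p:ℕ) = 0 := by
      rw [dgt, hempty]; rfl
    omega
  · rw [if_neg hn]
    have hlt : (p:ℕ) < n := by omega
    rw [if_pos hlt] at h1
    by_cases hd : (p:ℕ) ∈ descSet n π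
    · rw [if_pos hd]
      rw [if_pos hd] at h2
      omega
    · rw [if_neg hd]
      rw [if_neg hd] at h2
      omega

lemma des_ins {n : ℕ} (π : Equiv.Perm (Fin n)) (p : Fin (n+1)) :
    des (n+1) (ins π p) = des n π +
      (if inc n π (p:ℕ) ≤ des n π then 0 else 1) := by
  have h1 := (des_maj_ins π p).1
  have h2 := tri_d π (p:ℕ)
  have hp : (p:ℕ) ≤ n := Nat.lt_succ_iff.mp p.isLt
  rw [inc]
  by_cases hn : (p:ℕ) = n
  · have hnd : (p:ℕ) ∉ descSet n π := by rw [mem_descSet]; omega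
    have hlt : ¬ ((p:ℕ) < n) := by omega
    have hg : dgt n π (p:ℕ) = 0 := by
      rw [dgt, Finset.card_eq_zero, Finset.eq_empty_iff_forall_notMem]
      intro j hj
      simp only [Finset.mem_filter, mem_descSet] at hj
      omega
    rw [if_pos hn, if_pos (Nat.zero_le _)]
    rw [if_neg hlt] at h1
    rw [if_neg hnd] at h2
    omega
  · have hlt : (p:ℕ) < n := by omega
    rw [if_neg hn]
    rw [if_pos hlt] at h1
    by_cases hd : (p:ℕ) ∈ descSet n π
    · have := fact1 π hd
      rw [if_pos hd] at h2
      rw [if_pos hd, if_pos this]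
      omega
    · have hf2 := fact2 π hd
      have hc := dlt_le π (p:ℕ)
      rw [if_neg hd] at h2
      rw [if_neg hd, if_neg (by omega)]
      omega

lemma inc_le {n : ℕ} (π : Equiv.Perm (Fin n)) {p : ℕ} (hp : p ≤ n) :
    inc n π p ≤ n := by
  rw [inc]
  have hg := dgt_le π p
  by_cases hn : p = n
  · rw [if_pos hn]; omega
  · rw [if_neg hn]
    by_cases hd : p ∈ descSet n π
    · have := descSet_mem_lt π hd
      rw [if_pos hd]; omega
    · rw [if_neg hd]; omega

lemma dgt_strict {n : ℕ} (π : Equiv.Perm (Fin n)) {p1 p2 : ℕ} (h : p1 < p2)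
    (hd : p2 ∈ descSet n π) : dgt n π p2 < dgt n π p1 := by
  apply Finset.card_lt_card
  rw [Finset.ssubset_iff_of_subset]
  · exact ⟨p2, by simp only [Finset.mem_filter]; exact ⟨⟨hd, h⟩, by simp⟩⟩
  · intro j hj
    simp only [Finset.mem_filter] at hj ⊢
    exact ⟨hj.1, by omega⟩

lemma dgt_gap {n : ℕ} (π : Equiv.Perm (Fin n)) {p1 p2 : ℕ} (h : p1 < p2)
    (hd : p2 ∉ descSet n π) : dgt n π p1 ≤ dgt n π p2 + (p2 - p1 - 1) := by
  classical
  have hsplit := Finset.card_filter_add_card_filter_not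
    (s := (descSet n π).filter (fun j => p1 < j)) (p := fun j => p2 < j)
  have he1 : ((descSet n π).filter (fun j => p1 < j)).filter (fun j => p2 < j)
      = (descSet n π).filter (fun j => p2 < j) := by
    ext j
    simp only [Finset.mem_filter]
    constructor
    · rintro ⟨⟨hj, _⟩, hj2⟩; exact ⟨hj, hj2⟩
    · rintro ⟨hj, hj2⟩; exact ⟨⟨hj, by omega⟩, hj2⟩
  have he2 : ((descSet n π).filter (fun j => p1 < j)).filter (fun j => ¬ p2 < j)
      ⊆ Finset.Ico (p1+1) p2 := by
    intro j hj
    simp only [Finset.mem_filter] at hj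
    simp only [Finset.mem_Ico]
    have : j ≠ p2 := by rintro rfl; exact hd hj.1.1
    omega
  have hc2 := Finset.card_le_card he2
  rw [Nat.card_Ico] at hc2
  rw [dgt, dgt]
  rw [he1] at hsplit
  omega

lemma inc_ne {n : ℕ} (π : Equiv.Perm (Fin n)) {p1 p2 : ℕ} (h : p1 < p2) (hp2 : p2 ≤ n) :
    inc n π p1 ≠ inc n π p2 := by
  have hp1 : p1 ≠ n := by omega
  rw [inc, inc, if_neg hp1]
  by_cases hn : p2 = n
  · rw [if_pos hn]
    by_cases hd : p1 ∈ descSet n π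
    · rw [if_pos hd]; omega
    · rw [if_neg hd]; omega
  · rw [if_neg hn]
    have hp2n : p2 < n := by omega
    by_cases hd2 : p2 ∈ descSet n π
    · rw [if_pos hd2]
      by_cases hd1 : p1 ∈ descSet n π
      · rw [if_pos hd1]
        have := dgt_strict π h hd2
        omega
      · rw [if_neg hd1]
        have h1 := fact2 π hd1
        have h2 := fact1 π hd2
        omega
    · rw [if_neg hd2]
      by_cases hd1 : p1 ∈ descSet n π
      · rw [if_pos hd1]
        have h1 := fact1 π hd1
        have h2 := fact2 π hd2
        omega
      · rw [if_neg hd1]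
        have := dgt_gap π h hd2
        omega

lemma inc_image {n : ℕ} (π : Equiv.Perm (Fin n)) :
    (Finset.range (n+1)).image (inc n π) = Finset.range (n+1) := by
  have hinj : Set.InjOn (inc n π) (Finset.range (n+1)) := by
    intro a ha b hb hab
    simp only [Finset.coe_range, Set.mem_Iio] at ha hb
    rcases lt_trichotomy a b with h | h | h
    · exact absurd hab (inc_ne π h (by omega))
    · exact h
    · exact absurd hab.symm (inc_ne π h (by omega))
  apply Finset.eq_of_subset_of_card_le
  · intro t ht
    simp only [Finset.mem_image, Finset.mem_range] at ht ⊢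
    obtain ⟨p, hp, rfl⟩ := ht
    exact Nat.lt_succ_of_le (inc_le π (by omega))
  · rw [Finset.card_image_of_injOn hinj]

-- part f: the summation recursion
lemma ins_bijective (n : ℕ) :
    Function.Bijective (fun pp : Equiv.Perm (Fin n) × Fin (n+1) => ins pp.1 pp.2) := by
  rw [Fintype.bijective_iff_injective_and_card]
  constructor
  · rintro ⟨π1, p1⟩ ⟨π2, p2⟩ h
    simp only at h
    have hp : p1 = p2 := by
      by_contra hne
      obtain ⟨j, hj⟩ := Fin.exists_succAbove_eq hne
      have h1 : ins π1 p1 p1 = Fin.last n := ins_apply_self π1 p1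
      have h2 : ins π2 p2 p1 = (π2 j).castSucc := by rw [← hj, ins_apply_succAbove]
      rw [h] at h1
      rw [h1] at h2
      exact absurd h2.symm (Fin.castSucc_lt_last (π2 j)).ne
    subst hp
    have hπ : π1 = π2 := by
      ext j
      have h1 : ins π1 p1 (p1.succAbove j) = (π1 j).castSucc := ins_apply_succAbove π1 p1 j
      have h2 : ins π2 p1 (p1.succAbove j) = (π2 j).castSucc := ins_apply_succAbove π2 p1 j
      rw [h, h2] at h1
      exact congrArg Fin.val (Fin.castSucc_injective n h1.symm)
    rw [hπ]
  · simp [Fintype.card_perm, Nat.factorial_succ, mul_comm]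

lemma sum_ins {M : Type*} [AddCommMonoid M] (n : ℕ) (f : ℕ → ℕ → M) :
    ∑ σ : Equiv.Perm (Fin (n+1)), f (des (n+1) σ) (maj (n+1) σ)
      = ∑ π : Equiv.Perm (Fin n), ∑ t ∈ Finset.range (n+1),
          f (des n π + if t ≤ des n π then 0 else 1) (maj n π + t) := by
  rw [← Fintype.sum_bijective _ (ins_bijective n)
    (fun pp => f (des (n+1) (ins pp.1 pp.2)) (maj (n+1) (ins pp.1 pp.2)))
    (fun σ => f (des (n+1) σ) (maj (n+1) σ)) (fun pp => rfl)]
  rw [Fintype.sum_prod_type]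
  refine Finset.sum_congr rfl (fun π _ => ?_)
  have hstep : ∀ p : Fin (n+1), f (des (n+1) (ins π p)) (maj (n+1) (ins π p))
      = f (des n π + if inc n π (p:ℕ) ≤ des n π then 0 else 1) (maj n π + inc n π (p:ℕ)) := by
    intro p
    rw [des_ins, maj_ins]
  rw [Fintype.sum_congr _ _ hstep]
  rw [Fin.sum_univ_eq_sum_range (fun p => f (des n π + if inc n π p ≤ des n π then 0 else 1)
    (maj n π + inc n π p)) (n+1)]
  have hinj : Set.InjOn (inc n π) (Finset.range (n+1)) := by
    intro a ha b hb hab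
    simp only [Finset.coe_range, Set.mem_Iio] at ha hb
    rcases lt_trichotomy a b with h | h | h
    · exact absurd hab (inc_ne π h (by omega))
    · exact h
    · exact absurd hab.symm (inc_ne π h (by omega))
  conv_rhs => rw [← inc_image π]
  rw [Finset.sum_image (fun x hx y hy h => hinj hx hy h)]

-- part g: Hq and its recurrence
lemma des_le {n : ℕ} (π : Equiv.Perm (Fin n)) : des n π ≤ n - 1 := by
  have : descSet n π ⊆ Finset.Icc 1 (n-1) := Finset.filter_subset _ _
  have := Finset.card_le_card this
  rw [Nat.card_Icc] at this
  rw [des]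
  omega

noncomputable def Hq {R : Type*} [CommRing R] (q : R) (n k : ℕ) : R :=
  ∑ π : Equiv.Perm (Fin n), q^(maj n π + k*(n - des n π))

lemma telescope {R : Type*} [CommRing R] (q : R) (a s : ℕ) :
    (1 - q) * ∑ t ∈ Finset.range s, q^(a+t) = q^a - q^(a+s) := by
  have hsum : ∑ t ∈ Finset.range s, q^(a+t) = q^a * ∑ t ∈ Finset.range s, q^t := by
    rw [Finset.mul_sum]
    exact Finset.sum_congr rfl fun t _ => pow_add q a t
  rw [hsum, pow_add]
  linear_combination (-(q:R)^a) * geom_sum_mul q s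

lemma PW {R : Type*} [CommRing R] (q : R) (n d k m : ℕ) (hd : d ≤ n) :
    (1 - q) * ∑ t ∈ Finset.range (n+1),
        q^(m + t + (k+1)*(n+1-d - (if t ≤ d then 0 else 1)))
      = (q^(k+1) - q^(n+1)) * q^(m + (k+1)*(n-d))
        + (q^(n+1) - q^(n+2+k)) * q^(m + k*(n-d)) := by
  obtain ⟨e, rfl⟩ : ∃ e, n = d + e := ⟨n - d, by omega⟩
  have hsplit : Finset.range (d+e+1) = Finset.Ico 0 (d+1) ∪ Finset.Ico (d+1) (d+e+1) := by
    rw [Finset.range_eq_Ico, Finset.Ico_union_Ico_eq_Ico (Nat.zero_le _) (by omega)]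
  have hdisj : Disjoint (Finset.Ico 0 (d+1)) (Finset.Ico (d+1) (d+e+1)) := by
    apply Finset.Ico_disjoint_Ico_consecutive
  rw [show d + e + 1 = (d+e)+1 from rfl] at *
  rw [show Finset.range (d+e+1) = Finset.Ico 0 (d+1) ∪ Finset.Ico (d+1) (d+e+1) from hsplit,
    Finset.sum_union hdisj]
  have h1 : ∑ t ∈ Finset.Ico 0 (d+1),
      q^(m + t + (k+1)*(d+e+1-d - (if t ≤ d then 0 else 1)))
      = ∑ t ∈ Finset.range (d+1), q^((m + (k+1)*(e+1)) + t) := by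
    rw [← Finset.range_eq_Ico]
    refine Finset.sum_congr rfl fun t ht => ?_
    rw [Finset.mem_range] at ht
    have : t ≤ d := by omega
    rw [if_pos this]
    have hx : d + e + 1 - d - 0 = e + 1 := by omega
    rw [hx]
    congr 1
    omega
  have h2 : ∑ t ∈ Finset.Ico (d+1) (d+e+1),
      q^(m + t + (k+1)*(d+e+1-d - (if t ≤ d then 0 else 1)))
      = ∑ t ∈ Finset.range e, q^((m + (k+1)*e + (d+1)) + t) := by
    rw [Finset.sum_Ico_eq_sum_range]
    have he : d + e + 1 - (d+1) = e := by omega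
    rw [he]
    refine Finset.sum_congr rfl fun t ht => ?_
    have : ¬ (d + 1 + t ≤ d) := by omega
    rw [if_neg this]
    have hx : d + e + 1 - d - 1 = e := by omega
    rw [hx]
    congr 1
    omega
  rw [h1, h2, mul_add, telescope, telescope]
  have e2 : d + e - d = e := by omega
  rw [e2]
  ring

-- part h: recurrences for Hq
lemma Hq_rec {R : Type*} [CommRing R] (q : R) (n k : ℕ) :
    (1 - q) * Hq q (n+1) (k+1)
      = (q^(k+1) - q^(n+1)) * Hq q n (k+1) + (q^(n+1) - q^(n+2+k)) * Hq q n k := by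
  rw [Hq, sum_ins n (fun d m => q^(m + (k+1)*(n+1-d)))]
  rw [Finset.mul_sum]
  have hpt : ∀ π : Equiv.Perm (Fin n),
      (1-q) * ∑ t ∈ Finset.range (n+1),
        q^(maj n π + t + ((k+1)*(n+1-(des n π + if t ≤ des n π then 0 else 1))))
      = (q^(k+1) - q^(n+1)) * q^(maj n π + (k+1)*(n - des n π))
        + (q^(n+1) - q^(n+2+k)) * q^(maj n π + k*(n - des n π)) := by
    intro π
    have hd : des n π ≤ n := by have := des_le π; omega
    have := PW q n (des n π) k (maj n π) hd
    rw [← this]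
    congr 1
    refine Finset.sum_congr rfl fun t _ => ?_
    congr 2
    split_ifs <;> congr 1 <;> omega
  calc ∑ π : Equiv.Perm (Fin n), (1-q) * ∑ t ∈ Finset.range (n+1),
        q^(maj n π + t + (k+1)*(n+1-(des n π + if t ≤ des n π then 0 else 1)))
      = ∑ π : Equiv.Perm (Fin n),
        ((q^(k+1) - q^(n+1)) * q^(maj n π + (k+1)*(n - des n π))
        + (q^(n+1) - q^(n+2+k)) * q^(maj n π + k*(n - des n π))) := by
        refine Finset.sum_congr rfl fun π _ => ?_
        rw [← hpt π]
    _ = (q^(k+1) - q^(n+1)) * Hq q n (k+1) + (q^(n+1) - q^(n+2+k)) * Hq q n k := by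
        rw [Finset.sum_add_distrib, Hq, Hq, ← Finset.mul_sum, ← Finset.mul_sum]

lemma Hq_rec0 {R : Type*} [CommRing R] (q : R) (n : ℕ) :
    (1 - q) * Hq q (n+1) 0 = (1 - q^(n+1)) * Hq q n 0 := by
  rw [Hq, sum_ins n (fun d m => q^(m + 0*(n+1-d)))]
  rw [Finset.mul_sum, Hq, Finset.mul_sum]
  refine Finset.sum_congr rfl fun π _ => ?_
  have h1 : ∀ t, maj n π + t + 0*(n+1-(des n π + if t ≤ des n π then 0 else 1))
      = maj n π + t := by intro t; ring
  calc (1-q) * ∑ t ∈ Finset.range (n+1),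
        q^(maj n π + t + 0*(n+1-(des n π + if t ≤ des n π then 0 else 1)))
      = (1-q) * ∑ t ∈ Finset.range (n+1), q^(maj n π + t) := by
        congr 1
        exact Finset.sum_congr rfl fun t _ => by rw [h1]
    _ = q^(maj n π) - q^(maj n π + (n+1)) := telescope q _ _
    _ = (1 - q^(n+1)) * q^(maj n π + 0*(n - des n π)) := by
        rw [Nat.zero_mul, Nat.add_zero, pow_add]
        ring

-- part i: closed form (Carlitz evaluation identity)
lemma erase_prod_step {R : Type*} [CommRing R] (f : ℕ → R) {n k : ℕ} (hk : k ≤ n) :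
    ∏ j ∈ (Finset.range (n+2)).erase k, f j
      = f (n+1) * ∏ j ∈ (Finset.range (n+1)).erase k, f j := by
  have h : (Finset.range (n+2)).erase k
      = insert (n+1) ((Finset.range (n+1)).erase k) := by
    ext j
    simp only [Finset.mem_erase, Finset.mem_range, Finset.mem_insert]
    omega
  rw [h, Finset.prod_insert (by
    intro hc
    simp only [Finset.mem_erase, Finset.mem_range] at hc
    omega)]

lemma prod_shift {R : Type*} [CommRing R] (q : R) {n k : ℕ} (hk : k ≤ n) :
    ∏ j ∈ (Finset.range (n+2)).erase (k+1), (q^(k+1) - q^j)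
      = (q^(k+1) - 1) * (q^n * ∏ j ∈ (Finset.range (n+1)).erase k, (q^k - q^j)) := by
  have h0 : (Finset.range (n+2)).erase (k+1)
      = insert 0 (((Finset.range (n+1)).erase k).image (· + 1)) := by
    ext j
    simp only [Finset.mem_erase, Finset.mem_range, Finset.mem_insert, Finset.mem_image]
    constructor
    · intro ⟨h1, h2⟩
      rcases Nat.eq_zero_or_pos j with h | h
      · exact Or.inl h
      · exact Or.inr ⟨j-1, by omega, by omega⟩
    · rintro (rfl | ⟨j', hj', rfl⟩)
      · omega
      · omega
  rw [h0, Finset.prod_insert]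
  · rw [Finset.prod_image (fun a _ b _ h => by omega)]
    have hcard : ((Finset.range (n+1)).erase k).card = n := by
      rw [Finset.card_erase_of_mem (Finset.mem_range.mpr (by omega))]
      simp
    have : ∏ j ∈ (Finset.range (n+1)).erase k, (q^(k+1) - q^(j+1))
        = ∏ j ∈ (Finset.range (n+1)).erase k, (q * (q^k - q^j)) := by
      refine Finset.prod_congr rfl fun j _ => ?_
      rw [pow_succ, pow_succ]
      ring
    rw [this, Finset.prod_mul_distrib, Finset.prod_const, hcard, pow_zero]
  · simp only [Finset.mem_image]
    rintro ⟨j', _, h⟩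
    omega

lemma maj_zero_perm (π : Equiv.Perm (Fin 0)) : maj 0 π = 0 ∧ des 0 π = 0 := by
  have h : descSet 0 π = ∅ := by
    rw [Finset.eq_empty_iff_forall_notMem]
    intro j hj
    rw [mem_descSet] at hj
    omega
  rw [maj, des, h]
  simp

lemma key {R : Type*} [CommRing R] (q : R) : ∀ n k : ℕ, k ≤ n →
    (1-q)^n * Hq q n k
      = (n.choose k : R) * (-q)^k * ∏ j ∈ (Finset.range (n+1)).erase k, (q^k - q^j) := by
  intro n
  induction n with
  | zero =>
    intro k hk
    interval_cases k
    have h1 : Hq q 0 0 = 1 := by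
      rw [Hq]
      have hone : ∀ π : Equiv.Perm (Fin 0), (q^(maj 0 π + 0*(0 - des 0 π)) : R) = 1 := by
        intro π
        rw [(maj_zero_perm π).1]
        simp
      rw [Finset.sum_congr rfl (fun π _ => hone π)]
      simp
    rw [h1, Finset.range_one]
    simp
  | succ n ih =>
    intro k hk
    match k with
    | 0 =>
      have hstep : (1-q)^(n+1) * Hq q (n+1) 0 = (1-q)^n * ((1 - q^(n+1)) * Hq q n 0) := by
        rw [pow_succ]
        rw [show (1-q)^n * (1-q) * Hq q (n+1) 0 = (1-q)^n * ((1-q) * Hq q (n+1) 0) from by ring,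
          Hq_rec0]
      rw [hstep, show (1-q)^n * ((1 - q^(n+1)) * Hq q n 0)
          = (1 - q^(n+1)) * ((1-q)^n * Hq q n 0) from by ring, ih 0 (Nat.zero_le n)]
      rw [erase_prod_step (fun j => (q^0 - q^j)) (Nat.zero_le n)]
      simp only [Nat.choose_zero_right, pow_zero]
      ring
    | k + 1 =>
      have hk' : k ≤ n := by omega
      have hstep : (1-q)^(n+1) * Hq q (n+1) (k+1)
          = (1-q)^n * ((q^(k+1) - q^(n+1)) * Hq q n (k+1))
            + (q^(n+1) - q^(n+2+k)) * ((1-q)^n * Hq q n k) := by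
        rw [pow_succ, show (1-q)^n * (1-q) * Hq q (n+1) (k+1)
          = (1-q)^n * ((1-q) * Hq q (n+1) (k+1)) from by ring, Hq_rec]
        ring
      rw [hstep, ih k hk']
      have hterm1 : (1-q)^n * ((q^(k+1) - q^(n+1)) * Hq q n (k+1))
          = (n.choose (k+1) : R) * (-q)^(k+1)
            * ∏ j ∈ (Finset.range (n+2)).erase (k+1), (q^(k+1) - q^j) := by
        rcases Nat.lt_or_ge k n with h | h
        · have hk1 : k + 1 ≤ n := by omega
          rw [show (1-q)^n * ((q^(k+1) - q^(n+1)) * Hq q n (k+1))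
            = (q^(k+1) - q^(n+1)) * ((1-q)^n * Hq q n (k+1)) from by ring, ih (k+1) hk1]
          rw [erase_prod_step (fun j => (q^(k+1) - q^j)) hk1]
          ring
        · have hkn : k = n := by omega
          subst hkn
          rw [Nat.choose_succ_self, Nat.cast_zero, sub_self]
          ring
      rw [hterm1, prod_shift q hk']
      rw [Nat.choose_succ_succ, Nat.cast_add]
      ring

-- part j: generic field assembly
theorem carlitz_aux {K : Type*} [Field K] (q x : K) (hq0 : q ≠ 0) (hq1 : (1:K) - q ≠ 0)
    (hden : ∀ i : ℕ, (1 : K) - q ^ i * x ≠ 0)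
    (hqpow : ∀ a b : ℕ, a ≠ b → q ^ a ≠ q ^ b) (n : ℕ) :
    ∑ π : Equiv.Perm (Fin n), x ^ des n π * q ^ maj n π =
      (∏ i ∈ Finset.range (n + 1), (1 - x * q ^ i)) / (1 - q) ^ n *
        ∑ i ∈ Finset.range (n + 1), (n.choose i : K) *
          (-q) ^ i / (1 - q ^ i * x) := by
  classical
  have hqk0 : ∀ k : ℕ, q ^ k ≠ 0 := fun k => pow_ne_zero k hq0
  set P : Polynomial K := Polynomial.C ((1-q)^n) *
    ∑ π : Equiv.Perm (Fin n), Polynomial.C (q^(maj n π)) * Polynomial.X ^ (des n π) with hP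
  set Q : Polynomial K := ∑ i ∈ Finset.range (n+1),
    Polynomial.C ((n.choose i : K) * (-q)^i) *
      ∏ j ∈ (Finset.range (n+1)).erase i, (1 - Polynomial.C (q^j) * Polynomial.X) with hQdef
  set s : Finset K := (Finset.range (n+1)).image (fun k => (q^k)⁻¹) with hs
  have hinjpts : Set.InjOn (fun k => (q^k)⁻¹) (Finset.range (n+1)) := by
    intro a _ b _ hab
    by_contra hne
    exact hqpow a b hne (by
      have := congrArg (fun z => z⁻¹) hab
      simpa [inv_inv] using this)
  have hscard : s.card = n + 1 := by
    rw [hs, Finset.card_image_of_injOn hinjpts, Finset.card_range]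
  have hdegP : P.degree < (s.card : ℕ) := by
    rw [hscard]
    apply lt_of_le_of_lt (Polynomial.degree_mul_le _ _)
    have h1 : (Polynomial.C ((1-q)^n) : Polynomial K).degree ≤ 0 := Polynomial.degree_C_le
    have h2 : (∑ π : Equiv.Perm (Fin n),
        Polynomial.C (q^(maj n π)) * Polynomial.X ^ (des n π)).degree ≤ (n : WithBot ℕ) := by
      apply le_trans (Polynomial.degree_sum_le _ _)
      apply Finset.sup_le
      intro π _
      apply le_trans (Polynomial.degree_C_mul_X_pow_le _ _)
      exact_mod_cast Nat.le_of_lt_succ (Nat.lt_succ_of_le (by have := des_le π; omega))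
    calc (Polynomial.C ((1-q)^n) : Polynomial K).degree + (∑ π : Equiv.Perm (Fin n),
        Polynomial.C (q^(maj n π)) * Polynomial.X ^ (des n π)).degree
        ≤ 0 + (n : WithBot ℕ) := add_le_add h1 h2
      _ = (n : WithBot ℕ) := by rw [zero_add]
      _ < ((n+1 : ℕ) : WithBot ℕ) := by exact_mod_cast Nat.lt_succ_self n
  have hdegQ : Q.degree < (s.card : ℕ) := by
    rw [hscard]
    apply lt_of_le_of_lt (Polynomial.degree_sum_le _ _)
    rw [Finset.sup_lt_iff (by exact_mod_cast WithBot.bot_lt_coe (n+1))]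
    intro i hi
    apply lt_of_le_of_lt (Polynomial.degree_mul_le _ _)
    have h1 : (Polynomial.C ((n.choose i : K) * (-q)^i)).degree ≤ 0 := Polynomial.degree_C_le
    have h2 : (∏ j ∈ (Finset.range (n+1)).erase i,
        (1 - Polynomial.C (q^j) * Polynomial.X)).degree ≤ (n : WithBot ℕ) := by
      apply le_trans (Polynomial.degree_prod_le _ _)
      have hb : ∀ j ∈ (Finset.range (n+1)).erase i,
          (1 - Polynomial.C (q^j) * Polynomial.X).degree ≤ 1 := by
        intro j _
        apply le_trans (Polynomial.degree_sub_le _ _)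
        apply max_le
        · exact le_trans Polynomial.degree_one_le (by norm_num)
        · exact le_trans (Polynomial.degree_C_mul_X_le _) le_rfl
      apply le_trans (Finset.sum_le_sum hb)
      rw [Finset.sum_const, Finset.card_erase_of_mem (Finset.mem_range.mpr (by
        rw [Finset.mem_range] at hi; omega)), Finset.card_range]
      simp
    calc (Polynomial.C ((n.choose i : K) * (-q)^i)).degree + (∏ j ∈
          (Finset.range (n+1)).erase i, (1 - Polynomial.C (q^j) * Polynomial.X)).degree
        ≤ 0 + (n : WithBot ℕ) := add_le_add h1 h2
      _ = (n : WithBot ℕ) := by rw [zero_add]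
      _ < ((n+1 : ℕ) : WithBot ℕ) := by exact_mod_cast Nat.lt_succ_self n
  have hPev : ∀ y : K, P.eval y = (1-q)^n * ∑ π : Equiv.Perm (Fin n),
      q^(maj n π) * y^(des n π) := by
    intro y
    rw [hP]
    simp [Polynomial.eval_finset_sum]
  have hQev : ∀ y : K, Q.eval y = ∑ i ∈ Finset.range (n+1),
      (n.choose i : K) * (-q)^i * ∏ j ∈ (Finset.range (n+1)).erase i, (1 - q^j * y) := by
    intro y
    rw [hQdef]
    simp [Polynomial.eval_finset_sum, Polynomial.eval_prod]
  have hewal : ∀ y ∈ s, P.eval y = Q.eval y := by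
    intro y hy
    rw [hs, Finset.mem_image] at hy
    obtain ⟨k, hk, rfl⟩ := hy
    rw [Finset.mem_range] at hk
    have hk' : k ≤ n := by omega
    apply mul_right_cancel₀ (pow_ne_zero n (hqk0 k))
    have hL : P.eval ((q^k)⁻¹) * (q^k)^n = (1-q)^n * Hq q n k := by
      rw [hPev, Hq, mul_assoc]
      congr 1
      rw [Finset.sum_mul]
      refine Finset.sum_congr rfl fun π _ => ?_
      have hdle : des n π ≤ n := by have := des_le π; omega
      have hsplit : (q^k)^n = (q^k)^(des n π) * (q^k)^(n - des n π) := by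
        rw [← pow_add]
        congr 1
        omega
      rw [mul_assoc, hsplit, ← mul_assoc (((q^k)⁻¹)^(des n π)),
        ← mul_pow, inv_mul_cancel₀ (hqk0 k), one_pow, one_mul,
        ← pow_mul, ← pow_add]
    have hR : Q.eval ((q^k)⁻¹) * (q^k)^n = (n.choose k : K) * (-q)^k *
        ∏ j ∈ (Finset.range (n+1)).erase k, (q^k - q^j) := by
      rw [hQev, Finset.sum_mul]
      have hterm : ∀ i ∈ Finset.range (n+1),
          (n.choose i : K) * (-q)^i * (∏ j ∈ (Finset.range (n+1)).erase i,
            (1 - q^j * (q^k)⁻¹)) * (q^k)^n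
          = (n.choose i : K) * (-q)^i * ∏ j ∈ (Finset.range (n+1)).erase i,
            (q^k - q^j) := by
        intro i hi
        have hcard : ((Finset.range (n+1)).erase i).card = n := by
          rw [Finset.card_erase_of_mem hi, Finset.card_range]
          omega
        rw [mul_assoc]
        congr 1
        calc (∏ j ∈ (Finset.range (n+1)).erase i, (1 - q^j * (q^k)⁻¹)) * (q^k)^n
            = (∏ j ∈ (Finset.range (n+1)).erase i, (1 - q^j * (q^k)⁻¹)) *
              (q^k)^(((Finset.range (n+1)).erase i).card) := by rw [hcard]
          _ = ∏ j ∈ (Finset.range (n+1)).erase i, ((1 - q^j * (q^k)⁻¹) * q^k) :=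
              Finset.prod_mul_pow_card
          _ = ∏ j ∈ (Finset.range (n+1)).erase i, (q^k - q^j) := by
              refine Finset.prod_congr rfl fun j _ => ?_
              field_simp
      rw [Finset.sum_congr rfl hterm]
      have hzero : ∀ i ∈ Finset.range (n+1), i ≠ k →
          (n.choose i : K) * (-q)^i * ∏ j ∈ (Finset.range (n+1)).erase i,
            (q^k - q^j) = 0 := by
        intro i _ hik
        have hkmem : k ∈ (Finset.range (n+1)).erase i := by
          rw [Finset.mem_erase, Finset.mem_range]
          exact ⟨fun h => hik h.symm, by omega⟩
        rw [Finset.prod_eq_zero hkmem (sub_self (q^k)), mul_zero]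
      rw [Finset.sum_eq_single_of_mem k (Finset.mem_range.mpr (by omega))
        (fun i hi hik => hzero i hi hik)]
    rw [hL, hR, key q n k hk']
  have hPQ : P = Q := Polynomial.eq_of_degrees_lt_of_eval_finset_eq s hdegP hdegQ hewal
  have hmain : (1-q)^n * ∑ π : Equiv.Perm (Fin n), x ^ des n π * q ^ maj n π
      = ∑ i ∈ Finset.range (n+1), (n.choose i : K) * (-q)^i *
          ∏ j ∈ (Finset.range (n+1)).erase i, (1 - q^j * x) := by
    have := congrArg (Polynomial.eval x) hPQ
    rw [hPev, hQev] at this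
    rw [← this]
    congr 1
    exact Finset.sum_congr rfl fun π _ => mul_comm _ _
  have hprod : ∀ i ∈ Finset.range (n+1),
      (∏ j ∈ Finset.range (n+1), (1 - x * q^j))
        = (1 - q^i * x) * ∏ j ∈ (Finset.range (n+1)).erase i, (1 - q^j * x) := by
    intro i hi
    rw [show (∏ j ∈ Finset.range (n+1), (1 - x * q^j))
      = ∏ j ∈ Finset.range (n+1), (1 - q^j * x) from
      Finset.prod_congr rfl fun j _ => by ring]
    exact (Finset.mul_prod_erase _ _ hi).symm
  have hRHS : (∏ i ∈ Finset.range (n + 1), (1 - x * q ^ i)) / (1 - q) ^ n *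
        ∑ i ∈ Finset.range (n + 1), (n.choose i : K) * (-q) ^ i / (1 - q ^ i * x)
      = (∑ i ∈ Finset.range (n+1), (n.choose i : K) * (-q)^i *
          ∏ j ∈ (Finset.range (n+1)).erase i, (1 - q^j * x)) / (1-q)^n := by
    rw [div_mul_eq_mul_div]
    congr 1
    rw [Finset.mul_sum]
    refine Finset.sum_congr rfl fun i hi => ?_
    rw [hprod i hi]
    rw [mul_div_assoc', mul_comm ((1 - q^i * x)), mul_assoc, mul_comm ((1 - q^i * x)),
      mul_div_assoc]
    rw [mul_div_cancel_right₀ _ (hden i), mul_comm]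
  rw [hRHS, ← hmain]
  rw [mul_comm ((1-q)^n), mul_div_assoc, div_self (pow_ne_zero n hq1), mul_one]


/-- `C_n(x,q) = ((x;q)_{n+1} / (1-q)^n) · ∑_{i=0}^n C(n,i) (-q)^i / (1 - q^i x)`,
as rational functions in `x` and `q` (in the fraction field of `ℤ[x,q]`). -/
theorem stmt_6 (n : ℕ)
    (x q : FractionRing (MvPolynomial (Fin 2) ℤ))
    (hx : x = algebraMap (MvPolynomial (Fin 2) ℤ) _ (MvPolynomial.X 0))
    (hq : q = algebraMap (MvPolynomial (Fin 2) ℤ) _ (MvPolynomial.X 1)) :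
    ∑ π : Equiv.Perm (Fin n), x ^ des n π * q ^ maj n π =
      (∏ i ∈ Finset.range (n + 1), (1 - x * q ^ i)) / (1 - q) ^ n *
        ∑ i ∈ Finset.range (n + 1), (n.choose i : FractionRing (MvPolynomial (Fin 2) ℤ)) *
          (-q) ^ i / (1 - q ^ i * x) := by
  have hinj : Function.Injective
      (algebraMap (MvPolynomial (Fin 2) ℤ) (FractionRing (MvPolynomial (Fin 2) ℤ))) :=
    IsFractionRing.injective _ _
  have hmapne : ∀ f : MvPolynomial (Fin 2) ℤ, f ≠ 0 →
      algebraMap (MvPolynomial (Fin 2) ℤ) (FractionRing (MvPolynomial (Fin 2) ℤ)) f ≠ 0 := by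
    intro f hf h
    exact hf (hinj (by rw [h, map_zero]))
  apply carlitz_aux
  · rw [hq]
    apply hmapne
    intro h
    have := congrArg (MvPolynomial.eval (fun _ => (1:ℤ))) h
    simp at this
  · rw [hq, show (1 : FractionRing (MvPolynomial (Fin 2) ℤ)) = algebraMap _ _
      (1 : MvPolynomial (Fin 2) ℤ) from (map_one _).symm, ← map_sub]
    apply hmapne
    intro h
    have := congrArg (MvPolynomial.eval (fun _ => (0:ℤ))) h
    simp at this
  · intro i
    rw [hq, hx, show (1 : FractionRing (MvPolynomial (Fin 2) ℤ)) = algebraMap _ _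
      (1 : MvPolynomial (Fin 2) ℤ) from (map_one _).symm, ← map_pow, ← map_mul, ← map_sub]
    apply hmapne
    intro h
    have := congrArg (MvPolynomial.eval (fun _ => (0:ℤ))) h
    simp at this
  · intro a b hab h
    rw [hq, ← map_pow, ← map_pow] at h
    have h2 := congrArg (MvPolynomial.eval (fun _ => (2:ℤ))) (hinj h)
    simp only [map_pow, MvPolynomial.eval_X] at h2
    have h3 : (2:ℕ)^a = 2^b := by exact_mod_cast h2
    exact hab (Nat.pow_right_injective (le_refl 2) h3)
end

section
/- Substituting x = q^{-n} in the Carlitz q-Eulerian polynomial gives C_n(q^{-n}, q) = (-q)^n (q^{-n}; q)_n / (1-q)^n, where (a;q)_n = ∏_{i=0}^{n-1}(1 - a q^i). -/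
namespace QEuler

open Finset

/-- descent set of a word -/
def dSet (n : ℕ) (w : ℕ → ℕ) : Finset ℕ :=
  (Finset.Icc 1 (n - 1)).filter fun j => w j < w (j - 1)

/-- insert the value `t` at slot `i` -/
def insW (t : ℕ) (w : ℕ → ℕ) (i : ℕ) : ℕ → ℕ := fun k =>
  if k < i then w k else if k = i then t else w (k - 1)

lemma insW_lt {t i k : ℕ} {w : ℕ → ℕ} (h : k < i) : insW t w i k = w k := by
  simp only [insW]; rw [if_pos h]

lemma insW_self {t i : ℕ} {w : ℕ → ℕ} : insW t w i i = t := by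
  simp [insW]

lemma insW_gt {t i k : ℕ} {w : ℕ → ℕ} (h : i < k) : insW t w i k = w (k - 1) := by
  simp only [insW]; rw [if_neg (by omega), if_neg (by omega)]

lemma mem_dSet {n : ℕ} {w : ℕ → ℕ} {j : ℕ} :
    j ∈ dSet n w ↔ (1 ≤ j ∧ j ≤ n - 1) ∧ w j < w (j - 1) := by
  simp [dSet]

lemma dSet_congr {n : ℕ} {w w' : ℕ → ℕ} (h : ∀ k < n, w k = w' k) :
    dSet n w = dSet n w' := by
  ext j
  simp only [mem_dSet]
  constructor
  · rintro ⟨⟨h1, h2⟩, hd⟩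
    exact ⟨⟨h1, h2⟩, by rw [← h j (by omega), ← h (j-1) (by omega)]; exact hd⟩
  · rintro ⟨⟨h1, h2⟩, hd⟩
    exact ⟨⟨h1, h2⟩, by rw [h j (by omega), h (j-1) (by omega)]; exact hd⟩

lemma dSet_insW_lt {n i : ℕ} {w : ℕ → ℕ} (hw : ∀ k < n, w k < n) (hi : i < n) :
    dSet (n + 1) (insW n w i) =
      ((dSet n w).filter (· < i)) ∪
        insert (i + 1) (((dSet n w).filter fun j => i < j).image (· + 1)) := by
  ext j
  simp only [mem_union, mem_filter, mem_insert, mem_image, mem_dSet]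
  constructor
  · rintro ⟨⟨hj1, hj2⟩, hdesc⟩
    have hj2' : j ≤ n := by omega
    rcases lt_trichotomy j i with h | h | h
    · left
      rw [insW_lt h, insW_lt (show j - 1 < i by omega)] at hdesc
      exact ⟨⟨⟨hj1, by omega⟩, hdesc⟩, h⟩
    · exfalso
      subst h
      rw [insW_self, insW_lt (show j - 1 < j by omega)] at hdesc
      exact absurd hdesc (by have := hw (j-1) (by omega); omega)
    · rcases eq_or_lt_of_le (Nat.succ_le_of_lt h) with h' | h'
      · right; left; omega
      · right; right
        refine ⟨j - 1, ⟨⟨⟨by omega, by omega⟩, ?_⟩, by omega⟩, by omega⟩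
        rw [insW_gt h, insW_gt (show i < j - 1 by omega)] at hdesc
        rw [show j - 1 - 1 = j - 2 from by omega]
        exact hdesc
  · rintro (⟨⟨⟨hj1, hj2⟩, hd⟩, hlt⟩ | h | ⟨m, ⟨⟨⟨hm1, hm2⟩, hd⟩, hlt⟩, rfl⟩)
    · refine ⟨⟨hj1, by omega⟩, ?_⟩
      rw [insW_lt hlt, insW_lt (by omega)]
      exact hd
    · subst h
      refine ⟨⟨by omega, by omega⟩, ?_⟩
      rw [insW_gt (by omega), show i + 1 - 1 = i from by omega, insW_self]
      exact hw i hi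
    · refine ⟨⟨by omega, by omega⟩, ?_⟩
      rw [insW_gt (by omega), insW_gt (by omega), show m + 1 - 1 = m from by omega]
      exact hd

lemma dSet_insW_last {n : ℕ} {w : ℕ → ℕ} (hw : ∀ k < n, w k < n) :
    dSet (n + 1) (insW n w n) = dSet n w := by
  ext j
  simp only [mem_dSet]
  constructor
  · rintro ⟨⟨hj1, hj2⟩, hd⟩
    rcases eq_or_lt_of_le (show j ≤ n by omega) with h | h
    · exfalso
      subst h
      rw [insW_self, insW_lt (by omega)] at hd
      exact absurd hd (by have := hw (j-1) (by omega); omega)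
    · rw [insW_lt h, insW_lt (by omega)] at hd
      exact ⟨⟨hj1, by omega⟩, hd⟩
  · rintro ⟨⟨hj1, hj2⟩, hd⟩
    refine ⟨⟨hj1, by omega⟩, ?_⟩
    rw [insW_lt (by omega), insW_lt (by omega)]
    exact hd

end QEuler

namespace QEuler

open Finset

/-- number of descents `≤ i` -/
def bCnt (n : ℕ) (w : ℕ → ℕ) (i : ℕ) : ℕ := ((dSet n w).filter (· ≤ i)).card

/-- exponent increment of slot `i` (shifted by `des`) -/
def eSlot (n : ℕ) (w : ℕ → ℕ) (i : ℕ) : ℤ :=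
  (i : ℤ) + (dSet n w).card - bCnt n w i - n +
    (if i ∈ dSet n w then (n : ℤ) + 1 - i else 0)

variable {n : ℕ} {w : ℕ → ℕ}

lemma dSet_subset : dSet n w ⊆ Finset.Icc 1 (n - 1) := filter_subset _ _

lemma card_dSet_le : (dSet n w).card ≤ n - 1 := by
  have := card_le_card (dSet_subset (n := n) (w := w))
  simpa [Nat.card_Icc] using this

lemma bCnt_le_card (i : ℕ) : bCnt n w i ≤ (dSet n w).card :=
  card_le_card (filter_subset _ _)

lemma bCnt_le (i : ℕ) : bCnt n w i ≤ i := by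
  have h : (dSet n w).filter (· ≤ i) ⊆ Finset.Icc 1 i := by
    intro j hj
    rw [mem_filter, mem_dSet] at hj
    rw [mem_Icc]
    omega
  have := card_le_card h
  simpa [bCnt, Nat.card_Icc] using this

lemma one_le_bCnt {i : ℕ} (h : i ∈ dSet n w) : 1 ≤ bCnt n w i :=
  card_pos.mpr ⟨i, mem_filter.mpr ⟨h, le_refl i⟩⟩

lemma bCnt_split {i i' : ℕ} (h : i ≤ i') :
    bCnt n w i' = bCnt n w i + ((dSet n w).filter (fun j => i < j ∧ j ≤ i')).card := by
  rw [bCnt, bCnt, ← card_union_of_disjoint ?_, ← filter_or]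
  · apply congrArg
    apply filter_congr
    intro j _
    constructor
    · intro hj; omega
    · intro hj; omega
  · rw [disjoint_left]
    intro a ha hb
    rw [mem_filter] at ha hb
    omega

lemma card_filter_split (i : ℕ) :
    (dSet n w).card = bCnt n w i + ((dSet n w).filter (fun j => i < j)).card := by
  rw [bCnt]
  have h : (dSet n w).filter (fun j => i < j) = (dSet n w).filter (fun j => ¬ j ≤ i) := by
    apply filter_congr; intro j _; constructor <;> (intro; omega)
  rw [h, card_filter_add_card_filter_not]

lemma sum_filter_split (i : ℕ) :
    ∑ j ∈ dSet n w, j =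
      (∑ j ∈ (dSet n w).filter (· ≤ i), j) + ∑ j ∈ (dSet n w).filter (fun j => i < j), j := by
  have h : (dSet n w).filter (fun j => i < j) = (dSet n w).filter (fun j => ¬ j ≤ i) := by
    apply filter_congr; intro j _; constructor <;> (intro; omega)
  rw [h, sum_filter_add_sum_filter_not]

lemma filter_le_eq (i : ℕ) :
    (dSet n w).filter (· ≤ i) =
      ((dSet n w).filter (· < i)) ∪ ((dSet n w).filter (· = i)) := by
  rw [← filter_or]
  apply filter_congr
  intro j _
  constructor <;> (intro; omega)

lemma disj_lt_eq (i : ℕ) :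
    Disjoint ((dSet n w).filter (· < i)) ((dSet n w).filter (· = i)) := by
  rw [disjoint_left]
  intro a ha hb
  rw [mem_filter] at ha hb
  omega

lemma bCnt_eq (i : ℕ) :
    bCnt n w i = ((dSet n w).filter (· < i)).card + (if i ∈ dSet n w then 1 else 0) := by
  rw [bCnt, filter_le_eq, card_union_of_disjoint (disj_lt_eq i), filter_eq']
  by_cases h : i ∈ dSet n w <;> simp [h]

lemma sum_le_eq (i : ℕ) :
    (∑ j ∈ (dSet n w).filter (· ≤ i), j) =
      (∑ j ∈ (dSet n w).filter (· < i), j) + (if i ∈ dSet n w then i else 0) := by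
  rw [filter_le_eq, sum_union (disj_lt_eq i), filter_eq']
  by_cases h : i ∈ dSet n w <;> simp [h]

/-- The key exponent computation for the insertion at slot `i`. -/
lemma exponent_eq (hw : ∀ k < n, w k < n) {i : ℕ} (hi : i ≤ n) :
    (∑ j ∈ dSet (n + 1) (insW n w i), (j : ℤ)) -
        ((n : ℤ) + 1) * (dSet (n + 1) (insW n w i)).card =
      ((∑ j ∈ dSet n w, (j : ℤ)) - (n : ℤ) * (dSet n w).card) - (dSet n w).card +
        eSlot n w i := by
  obtain heq | hilt := eq_or_lt_of_le hi
  · rw [heq]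
    rw [dSet_insW_last hw]
    have hbn : bCnt n w n = (dSet n w).card := by
      rw [bCnt]
      apply congrArg
      apply filter_true_of_mem
      intro j hj
      rw [mem_dSet] at hj
      omega
    have hnmem : n ∉ dSet n w := by
      intro h
      rw [mem_dSet] at h
      omega
    rw [eSlot, hbn, if_neg hnmem]
    ring
  · rw [dSet_insW_lt hw hilt]
    have h1 := card_filter_split (n := n) (w := w) i
    have h2 := bCnt_eq (n := n) (w := w) i
    have h3 := sum_filter_split (n := n) (w := w) i
    have h4 := sum_le_eq (n := n) (w := w) i
    set D := dSet n w with hD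
    set A := D.filter (· < i) with hA
    set B := D.filter (fun j => i < j) with hB
    have hdisj : Disjoint A (insert (i + 1) (B.image (· + 1))) := by
      rw [disjoint_left]
      intro a ha hb
      rw [hA, mem_filter] at ha
      rw [mem_insert, mem_image] at hb
      rcases hb with rfl | ⟨m, hm, hmeq⟩
      · omega
      · have hmeq' : m + 1 = a := hmeq
        rw [hB, mem_filter] at hm
        omega
    have hni : (i + 1) ∉ B.image (· + 1) := by
      rw [mem_image]
      rintro ⟨m, hm, hmeq⟩
      have hmeq' : m + 1 = i + 1 := hmeq
      rw [hB, mem_filter] at hm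
      omega
    have hinj : Function.Injective (· + 1 : ℕ → ℕ) := fun a b hab => by
      have : a + 1 = b + 1 := hab
      omega
    have hcard' : ((A ∪ insert (i + 1) (B.image (· + 1))).card : ℤ) =
        (A.card : ℤ) + 1 + (1 + B.card) - 1 := by
      rw [card_union_of_disjoint hdisj, card_insert_of_notMem hni,
        card_image_of_injective _ hinj]
      push_cast
      ring
    have hsum' : (∑ j ∈ A ∪ insert (i + 1) (B.image (· + 1)), (j : ℤ)) =
        (∑ j ∈ A, (j : ℤ)) + ((i : ℤ) + 1) + ((∑ j ∈ B, (j : ℤ)) + B.card) := by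
      rw [sum_union hdisj, sum_insert hni, sum_image (fun a _ b _ hab => hinj hab)]
      push_cast
      rw [sum_add_distrib]
      simp only [sum_const, nsmul_eq_mul, mul_one]
      ring
    rw [eSlot, ← hD]
    by_cases h : i ∈ D
    · simp only [h, if_true] at h2 h4 ⊢
      rw [h4] at h3
      zify at h1 h2 h3
      rw [hcard', hsum', h1, h2, h3]
      ring
    · simp only [h, if_false] at h2 h4 ⊢
      rw [h4] at h3
      zify at h1 h2 h3
      rw [hcard', hsum', h1, h2, h3]
      ring

end QEuler

namespace QEuler

open Finset

variable {n : ℕ} {w : ℕ → ℕ}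

lemma bCnt_lt_bCnt {i i' : ℕ} (h : i < i') (h' : i' ∈ dSet n w) :
    bCnt n w i < bCnt n w i' := by
  apply card_lt_card
  rw [Finset.ssubset_def]
  constructor
  · apply monotone_filter_right
    intro j hj
    omega
  · intro hsub
    have := hsub (mem_filter.mpr ⟨h', le_refl i'⟩)
    rw [mem_filter] at this
    omega

lemma bCnt_gap {i i' : ℕ} (h : i < i') (h' : i' ∉ dSet n w) :
    bCnt n w i' ≤ bCnt n w i + (i' - 1 - i) := by
  rw [bCnt_split (le_of_lt h)]
  have hsub : (dSet n w).filter (fun j => i < j ∧ j ≤ i') ⊆ Finset.Icc (i + 1) (i' - 1) := by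
    intro j hj
    rw [mem_filter] at hj
    rw [mem_Icc]
    have : j ≠ i' := by rintro rfl; exact h' hj.1
    omega
  have := card_le_card hsub
  rw [Nat.card_Icc] at this
  omega

lemma filter_gt_card_le (i : ℕ) :
    ((dSet n w).filter (fun j => i < j)).card ≤ n - 1 - i := by
  have hsub : (dSet n w).filter (fun j => i < j) ⊆ Finset.Icc (i + 1) (n - 1) := by
    intro j hj
    rw [mem_filter, mem_dSet] at hj
    rw [mem_Icc]
    omega
  have := card_le_card hsub
  rw [Nat.card_Icc] at this
  omega

lemma sum_eSlot {K : Type*} [Field K] (q : K) (hq : q ≠ 0) :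
    ∑ i ∈ range (n + 1), q ^ eSlot n w i
      = ∑ j ∈ range (n + 1), q ^ ((j : ℤ) + (dSet n w).card - n) := by
  have hdn : (dSet n w).card ≤ n := le_trans card_dSet_le (Nat.sub_le n 1)
  have hDrange : dSet n w ⊆ range (n + 1) := by
    intro j hj; rw [mem_dSet] at hj; rw [mem_range]; omega
  have hfil : (range (n + 1)).filter (· ∈ dSet n w) = dSet n w := by
    rw [filter_mem_eq_inter]; exact inter_eq_right.mpr hDrange
  have hcardfil : ((range (n + 1)).filter (fun i => ¬ i ∈ dSet n w)).card
      = n + 1 - (dSet n w).card := by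
    have := card_filter_add_card_filter_not (s := range (n + 1))
      (p := fun i => i ∈ dSet n w)
    rw [hfil, card_range] at this
    omega
  -- part 1 : sum over descent slots
  have hinj1 : ∀ a ∈ dSet n w, ∀ b ∈ dSet n w,
      (dSet n w).card - bCnt n w a + 1 = (dSet n w).card - bCnt n w b + 1 → a = b := by
    intro a ha b hb hg
    rcases lt_trichotomy a b with h | h | h
    · have h1 := bCnt_lt_bCnt h hb
      have h2 := bCnt_le_card (n := n) (w := w) a
      have h3 := bCnt_le_card (n := n) (w := w) b
      omega
    · exact h
    · have h1 := bCnt_lt_bCnt h ha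
      have h2 := bCnt_le_card (n := n) (w := w) a
      have h3 := bCnt_le_card (n := n) (w := w) b
      omega
  have himg1 : (dSet n w).image (fun i => (dSet n w).card - bCnt n w i + 1)
      = (range (dSet n w).card).image (· + 1) := by
    apply eq_of_subset_of_card_le
    · intro m hm
      rw [mem_image] at hm ⊢
      obtain ⟨i, hi, rfl⟩ := hm
      refine ⟨(dSet n w).card - bCnt n w i, mem_range.mpr ?_, rfl⟩
      have h1 := one_le_bCnt hi
      have h2 := bCnt_le_card (n := n) (w := w) i
      omega
    · rw [card_image_of_injective _ (add_left_injective 1),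
        card_range, card_image_of_injOn (fun a ha b hb hg => hinj1 a ha b hb hg)]
  have hpart1 : ∑ i ∈ (range (n + 1)).filter (· ∈ dSet n w), q ^ eSlot n w i
      = ∑ j ∈ range (dSet n w).card, q ^ ((j : ℤ) + 1) := by
    rw [hfil]
    have hcong : ∀ i ∈ dSet n w, q ^ eSlot n w i
        = q ^ ((((dSet n w).card - bCnt n w i + 1 : ℕ)) : ℤ) := by
      intro i hi
      congr 1
      rw [eSlot, if_pos hi]
      push_cast [Nat.cast_sub (bCnt_le_card (n := n) (w := w) i)]
      ring
    rw [sum_congr rfl hcong,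
      ← sum_image (g := fun i => (dSet n w).card - bCnt n w i + 1)
        (f := fun m : ℕ => q ^ ((m : ℕ) : ℤ)) hinj1,
      himg1,
      sum_image (g := fun x : ℕ => x + 1) (f := fun m : ℕ => q ^ ((m : ℕ) : ℤ))
        (fun a _ b _ h => by simpa using h)]
    apply sum_congr rfl
    intro j _
    have hj1 : ((j : ℤ) + 1) = (((j + 1 : ℕ) : ℕ) : ℤ) := by push_cast; ring
    rw [hj1]
  -- part 2 : sum over non-descent slots
  have hinj2 : ∀ a ∈ (range (n + 1)).filter (fun i => ¬ i ∈ dSet n w),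
      ∀ b ∈ (range (n + 1)).filter (fun i => ¬ i ∈ dSet n w),
      a - bCnt n w a = b - bCnt n w b → a = b := by
    intro a ha b hb hg
    rw [mem_filter, mem_range] at ha hb
    rcases lt_trichotomy a b with h | h | h
    · have h1 := bCnt_gap h hb.2
      have h2 := bCnt_le (n := n) (w := w) a
      have h3 := bCnt_le (n := n) (w := w) b
      omega
    · exact h
    · have h1 := bCnt_gap h ha.2
      have h2 := bCnt_le (n := n) (w := w) a
      have h3 := bCnt_le (n := n) (w := w) b
      omega
  have himg2 : ((range (n + 1)).filter (fun i => ¬ i ∈ dSet n w)).image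
        (fun i => i - bCnt n w i)
      = range (n - (dSet n w).card + 1) := by
    apply eq_of_subset_of_card_le
    · intro m hm
      rw [mem_image] at hm
      obtain ⟨i, hi, rfl⟩ := hm
      rw [mem_filter, mem_range] at hi
      rw [mem_range]
      have h1 := bCnt_le (n := n) (w := w) i
      have h2 := card_filter_split (n := n) (w := w) i
      have h3 := filter_gt_card_le (n := n) (w := w) i
      omega
    · rw [card_range, card_image_of_injOn (fun a ha b hb hg => hinj2 a ha b hb hg), hcardfil]
      omega
  have hpart2 : ∑ i ∈ (range (n + 1)).filter (fun i => ¬ i ∈ dSet n w), q ^ eSlot n w i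
      = ∑ j ∈ range (n - (dSet n w).card + 1), q ^ ((j : ℤ) + (dSet n w).card - n) := by
    have hcong : ∀ i ∈ (range (n + 1)).filter (fun i => ¬ i ∈ dSet n w),
        q ^ eSlot n w i = q ^ (((i - bCnt n w i : ℕ) : ℤ) + ((dSet n w).card - n : ℤ)) := by
      intro i hi
      rw [mem_filter, mem_range] at hi
      congr 1
      rw [eSlot, if_neg hi.2]
      push_cast [Nat.cast_sub (bCnt_le (n := n) (w := w) i)]
      ring
    rw [sum_congr rfl hcong]
    have hsplit : ∀ m : ℕ, q ^ ((m : ℤ) + ((dSet n w).card - n : ℤ))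
        = q ^ ((m : ℕ) : ℤ) * q ^ (((dSet n w).card : ℤ) - n) := by
      intro m
      rw [← zpow_add₀ hq]
    rw [sum_congr rfl (fun i _ => hsplit (i - bCnt n w i)), ← sum_mul,
      ← sum_image (g := fun i => i - bCnt n w i) (f := fun m : ℕ => q ^ ((m : ℕ) : ℤ)) hinj2,
      himg2, sum_mul]
    apply sum_congr rfl
    intro j _
    rw [← zpow_add₀ hq]
    congr 1
    ring
  have hRHS : ∑ j ∈ range (n + 1), q ^ ((j : ℤ) + (dSet n w).card - n)
      = (∑ j ∈ range (n - (dSet n w).card + 1), q ^ ((j : ℤ) + (dSet n w).card - n))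
        + ∑ j ∈ range (dSet n w).card, q ^ ((j : ℤ) + 1) := by
    rw [show n + 1 = (n - (dSet n w).card + 1) + (dSet n w).card from by omega, sum_range_add]
    congr 1
    apply sum_congr rfl
    intro j _
    show q ^ (((n - (dSet n w).card + 1 + j : ℕ) : ℤ) + (dSet n w).card - n)
        = q ^ ((j : ℤ) + 1)
    congr 1
    push_cast [Nat.cast_sub hdn]
    ring
  rw [← sum_filter_add_sum_filter_not (range (n + 1)) (fun i => i ∈ dSet n w), hpart1, hpart2,
    hRHS]
  ring

end QEuler

namespace QEuler

open Finset Equiv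

def extPerm {n : ℕ} (σ : Equiv.Perm (Fin n)) : Equiv.Perm (Fin (n + 1)) :=
  (finSuccEquivLast.trans (Equiv.optionCongr σ)).trans finSuccEquivLast.symm

lemma extPerm_castSucc {n : ℕ} (σ : Equiv.Perm (Fin n)) (j : Fin n) :
    extPerm σ (Fin.castSucc j) = Fin.castSucc (σ j) := by
  simp [extPerm]

lemma extPerm_last {n : ℕ} (σ : Equiv.Perm (Fin n)) :
    extPerm σ (Fin.last n) = Fin.last n := by
  simp [extPerm]

def slotPerm {n : ℕ} (i : Fin (n + 1)) : Equiv.Perm (Fin (n + 1)) :=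
  (Fin.revPerm.trans (Fin.cycleRange i.rev)).trans Fin.revPerm

lemma slotPerm_apply {n : ℕ} (i k : Fin (n + 1)) :
    slotPerm i k = Fin.rev (Fin.cycleRange i.rev (Fin.rev k)) := rfl

lemma slotPerm_lt {n : ℕ} {i k : Fin (n + 1)} (h : k < i) : slotPerm i k = k := by
  rw [slotPerm_apply, Fin.cycleRange_of_gt (by rwa [Fin.rev_lt_rev]), Fin.rev_rev]

lemma slotPerm_self {n : ℕ} (i : Fin (n + 1)) : slotPerm i i = Fin.last n := by
  rw [slotPerm_apply, Fin.cycleRange_self, Fin.rev_zero]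

lemma slotPerm_val_gt {n : ℕ} {i k : Fin (n + 1)} (h : i < k) :
    ((slotPerm i k : Fin (n + 1)) : ℕ) = (k : ℕ) - 1 := by
  rw [slotPerm_apply, Fin.cycleRange_of_lt (by rwa [Fin.rev_lt_rev])]
  have hk1 : 1 ≤ (k : ℕ) := by
    have : (i : ℕ) < (k : ℕ) := h
    omega
  have hkn : (k : ℕ) ≤ n := by
    have := k.isLt
    omega
  have hrevk : ((Fin.rev k : Fin (n + 1)) : ℕ) = n - (k : ℕ) := by
    rw [Fin.val_rev]
    omega
  have hlt : Fin.rev k < Fin.last n := by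
    rw [Fin.lt_def, hrevk, Fin.val_last]
    omega
  have hadd : ((Fin.rev k + 1 : Fin (n + 1)) : ℕ) = n - (k : ℕ) + 1 := by
    rw [Fin.val_add_one_of_lt hlt, hrevk]
  rw [Fin.val_rev, hadd]
  omega

def insP {n : ℕ} (σ : Equiv.Perm (Fin n)) (i : Fin (n + 1)) : Equiv.Perm (Fin (n + 1)) :=
  (slotPerm i).trans (extPerm σ)

lemma insP_apply {n : ℕ} (σ : Equiv.Perm (Fin n)) (i k : Fin (n + 1)) :
    insP σ i k = extPerm σ (slotPerm i k) := rfl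

lemma permVal_lt {n : ℕ} (σ : Equiv.Perm (Fin n)) : ∀ k < n, permVal n σ k < n := by
  intro k hk
  rw [permVal, dif_pos hk]
  exact (σ _).isLt

lemma permVal_insP {n : ℕ} (σ : Equiv.Perm (Fin n)) (i : Fin (n + 1)) (k : ℕ)
    (hk : k < n + 1) :
    permVal (n + 1) (insP σ i) k = insW n (permVal n σ) (i : ℕ) k := by
  have hin : (i : ℕ) ≤ n := by have := i.isLt; omega
  rw [permVal, dif_pos hk]
  rcases lt_trichotomy k (i : ℕ) with h | h | h
  · rw [insW_lt h]
    have hkn : k < n := by omega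
    have hfin : (⟨k, hk⟩ : Fin (n + 1)) = Fin.castSucc ⟨k, hkn⟩ := rfl
    rw [insP_apply, slotPerm_lt (show (⟨k, hk⟩ : Fin (n + 1)) < i from h), hfin,
      extPerm_castSucc]
    rw [permVal, dif_pos hkn]
    rfl
  · subst h
    have hfin : (⟨(i : ℕ), hk⟩ : Fin (n + 1)) = i := by
      apply Fin.ext
      rfl
    rw [hfin, insW_self, insP_apply, slotPerm_self, extPerm_last]
    rfl
  · rw [insW_gt h]
    have hkn : k - 1 < n := by omega
    have hval : ((slotPerm i ⟨k, hk⟩ : Fin (n + 1)) : ℕ) = k - 1 :=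
      slotPerm_val_gt (show i < (⟨k, hk⟩ : Fin (n + 1)) from h)
    have hfin : slotPerm i ⟨k, hk⟩ = Fin.castSucc ⟨k - 1, hkn⟩ := by
      apply Fin.ext
      rw [hval]
      rfl
    rw [insP_apply, hfin, extPerm_castSucc]
    rw [permVal, dif_pos hkn]
    rfl

lemma descSet_eq_dSet (n : ℕ) (π : Equiv.Perm (Fin n)) :
    descSet n π = dSet n (permVal n π) := rfl

lemma descSet_insP {n : ℕ} (σ : Equiv.Perm (Fin n)) (i : Fin (n + 1)) :
    descSet (n + 1) (insP σ i) = dSet (n + 1) (insW n (permVal n σ) (i : ℕ)) := by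
  rw [descSet_eq_dSet]
  exact dSet_congr (fun k hk => permVal_insP σ i k hk)

lemma insP_bijective (n : ℕ) :
    Function.Bijective (fun p : Equiv.Perm (Fin n) × Fin (n + 1) => insP p.1 p.2) := by
  rw [Fintype.bijective_iff_injective_and_card]
  constructor
  · rintro ⟨σ, i⟩ ⟨σ', i'⟩ h
    simp only at h
    have hlast : ∀ (τ : Equiv.Perm (Fin n)) (j : Fin (n + 1)), insP τ j j = Fin.last n := by
      intro τ j
      rw [insP_apply, slotPerm_self, extPerm_last]
    have hii : i = i' := by
      apply (insP σ i).injective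
      rw [hlast σ i, h, hlast σ' i']
    subst hii
    have hext : ∀ x, extPerm σ x = extPerm σ' x := by
      intro x
      have h1 : insP σ i ((slotPerm i).symm x) = extPerm σ x := by
        rw [insP_apply, Equiv.apply_symm_apply]
      have h2 : insP σ' i ((slotPerm i).symm x) = extPerm σ' x := by
        rw [insP_apply, Equiv.apply_symm_apply]
      rw [← h1, h, h2]
    have hσ : σ = σ' := by
      apply Equiv.ext
      intro j
      have := hext (Fin.castSucc j)
      rw [extPerm_castSucc, extPerm_castSucc] at this
      exact Fin.castSucc_injective n this
    rw [hσ]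
  · rw [Fintype.card_prod, Fintype.card_perm, Fintype.card_perm, Fintype.card_fin,
      Fintype.card_fin, Nat.factorial_succ, mul_comm]

end QEuler

namespace QEuler

open Finset Equiv

set_option maxHeartbeats 1000000 in
lemma sum_succ {K : Type*} [Field K] (q : K) (hq : q ≠ 0) (n : ℕ) :
    (∑ π : Equiv.Perm (Fin (n + 1)),
        q ^ ((maj (n + 1) π : ℤ) - ((n : ℤ) + 1) * des (n + 1) π))
      = (∑ π : Equiv.Perm (Fin n), q ^ ((maj n π : ℤ) - (n : ℤ) * des n π)) *
          ∑ j ∈ range (n + 1), q ^ ((j : ℤ) - n) := by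
  calc
    (∑ π : Equiv.Perm (Fin (n + 1)),
        q ^ ((maj (n + 1) π : ℤ) - ((n : ℤ) + 1) * des (n + 1) π))
      = ∑ p : Equiv.Perm (Fin n) × Fin (n + 1),
          q ^ ((maj (n + 1) (insP p.1 p.2) : ℤ) - ((n : ℤ) + 1) * des (n + 1) (insP p.1 p.2)) :=
        (Fintype.sum_bijective _ (insP_bijective n) _ _ (fun p => rfl)).symm
    _ = ∑ σ : Equiv.Perm (Fin n), ∑ i : Fin (n + 1),
          q ^ ((maj (n + 1) (insP σ i) : ℤ) - ((n : ℤ) + 1) * des (n + 1) (insP σ i)) :=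
        by apply Fintype.sum_prod_type
    _ = ∑ σ : Equiv.Perm (Fin n),
          q ^ ((maj n σ : ℤ) - (n : ℤ) * des n σ) * ∑ j ∈ range (n + 1), q ^ ((j : ℤ) - n) := by
        apply Finset.sum_congr rfl
        intro σ _
        have hw := permVal_lt σ
        calc
          ∑ i : Fin (n + 1),
              q ^ ((maj (n + 1) (insP σ i) : ℤ) - ((n : ℤ) + 1) * des (n + 1) (insP σ i))
            = ∑ i : Fin (n + 1),
                q ^ ((∑ j ∈ dSet (n + 1) (insW n (permVal n σ) (i : ℕ)), (j : ℤ))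
                  - ((n : ℤ) + 1) * (dSet (n + 1) (insW n (permVal n σ) (i : ℕ))).card) := by
              apply Finset.sum_congr rfl
              intro i _
              congr 1
              rw [maj, des, descSet_insP σ i]
              push_cast
              ring
          _ = ∑ k ∈ range (n + 1),
                q ^ ((∑ j ∈ dSet (n + 1) (insW n (permVal n σ) k), (j : ℤ))
                  - ((n : ℤ) + 1) * (dSet (n + 1) (insW n (permVal n σ) k)).card) :=
              Fin.sum_univ_eq_sum_range
                (fun k => q ^ ((∑ j ∈ dSet (n + 1) (insW n (permVal n σ) k), (j : ℤ))
                  - ((n : ℤ) + 1) * (dSet (n + 1) (insW n (permVal n σ) k)).card)) (n + 1)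
          _ = ∑ k ∈ range (n + 1),
                q ^ (((∑ j ∈ dSet n (permVal n σ), (j : ℤ))
                    - (n : ℤ) * (dSet n (permVal n σ)).card) - (dSet n (permVal n σ)).card)
                  * q ^ eSlot n (permVal n σ) k := by
              apply Finset.sum_congr rfl
              intro k hk
              rw [mem_range] at hk
              rw [exponent_eq hw (show k ≤ n by omega), zpow_add₀ hq]
          _ = q ^ (((∑ j ∈ dSet n (permVal n σ), (j : ℤ))
                  - (n : ℤ) * (dSet n (permVal n σ)).card) - (dSet n (permVal n σ)).card)
                * ∑ j ∈ range (n + 1), q ^ ((j : ℤ) + (dSet n (permVal n σ)).card - n) := by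
              rw [← mul_sum, sum_eSlot q hq]
          _ = q ^ ((maj n σ : ℤ) - (n : ℤ) * des n σ) * ∑ j ∈ range (n + 1), q ^ ((j : ℤ) - n) := by
              rw [mul_sum, mul_sum]
              apply Finset.sum_congr rfl
              intro j _
              rw [← zpow_add₀ hq, ← zpow_add₀ hq]
              have hmaj : (maj n σ : ℤ) = ∑ j ∈ dSet n (permVal n σ), (j : ℤ) := by
                rw [maj, descSet_eq_dSet]
                push_cast
                ring
              have hdes : (des n σ : ℤ) = ((dSet n (permVal n σ)).card : ℤ) := by
                rw [des, descSet_eq_dSet]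
              rw [hmaj, hdes]
              congr 1
              ring
    _ = (∑ π : Equiv.Perm (Fin n), q ^ ((maj n π : ℤ) - (n : ℤ) * des n π)) *
          ∑ j ∈ range (n + 1), q ^ ((j : ℤ) - n) := by
        rw [sum_mul]

lemma sum_eq_prod {K : Type*} [Field K] (q : K) (hq : q ≠ 0) (n : ℕ) :
    (∑ π : Equiv.Perm (Fin n), q ^ ((maj n π : ℤ) - (n : ℤ) * des n π))
      = ∏ m ∈ range n, ∑ j ∈ range (m + 1), q ^ ((j : ℤ) - m) := by
  induction n with
  | zero =>
      rw [prod_range_zero]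
      have hone : ∀ π : Equiv.Perm (Fin 0),
          q ^ ((maj 0 π : ℤ) - ((0 : ℕ) : ℤ) * des 0 π) = 1 := by
        intro π
        have hds : descSet 0 π = ∅ := by simp [descSet]
        simp [maj, des, hds]
      rw [Finset.sum_congr rfl (fun π _ => hone π), Finset.sum_const, card_univ,
        Fintype.card_perm, Fintype.card_fin]
      simp
  | succ n ih =>
      have := sum_succ q hq n
      push_cast at this ⊢
      rw [this, ih, prod_range_succ]

end QEuler

open Finset QEuler in
/-- `C_n(q^{-n}, q) = (-q)^n (q^{-n}; q)_n / (1-q)^n`, as rational functions of `q`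
(in the field `ℚ(q)` of rational functions, with `q = RatFunc.X`). -/
theorem stmt_8 (n : ℕ) :
    ∑ π : Equiv.Perm (Fin n),
        ((RatFunc.X : RatFunc ℚ) ^ (-(n : ℤ))) ^ des n π * RatFunc.X ^ maj n π =
      (-RatFunc.X : RatFunc ℚ) ^ n *
        (∏ i ∈ Finset.range n, (1 - RatFunc.X ^ (-(n : ℤ)) * RatFunc.X ^ i)) /
          (1 - RatFunc.X) ^ n := by
  have hX : (RatFunc.X : RatFunc ℚ) ≠ 0 := RatFunc.X_ne_zero
  have h1X : (1 - RatFunc.X : RatFunc ℚ) ≠ 0 := by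
    have hp : (1 - Polynomial.X : Polynomial ℚ) ≠ 0 := by
      intro h
      have := congrArg (fun p => Polynomial.coeff p 1) h
      simp [Polynomial.coeff_one] at this
    have := RatFunc.algebraMap_ne_zero hp
    rwa [map_sub, map_one, RatFunc.algebraMap_X] at this
  have hL : (∑ π : Equiv.Perm (Fin n),
        ((RatFunc.X : RatFunc ℚ) ^ (-(n : ℤ))) ^ des n π * RatFunc.X ^ maj n π)
      = ∑ π : Equiv.Perm (Fin n),
          (RatFunc.X : RatFunc ℚ) ^ ((maj n π : ℤ) - (n : ℤ) * des n π) := by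
    apply Finset.sum_congr rfl
    intro π _
    rw [← zpow_natCast ((RatFunc.X : RatFunc ℚ) ^ (-(n : ℤ))) (des n π), ← zpow_mul,
      ← zpow_natCast (RatFunc.X : RatFunc ℚ) (maj n π), ← zpow_add₀ hX]
    congr 1
    ring
  rw [hL, sum_eq_prod _ hX n, eq_div_iff (pow_ne_zero n h1X)]
  have hTm : ∀ m : ℕ,
      (∑ j ∈ range (m + 1), (RatFunc.X : RatFunc ℚ) ^ ((j : ℤ) - m)) * (1 - RatFunc.X)
        = (-RatFunc.X) * (1 - RatFunc.X ^ (-(m : ℤ) - 1)) := by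
    intro m
    have hgeom : (∑ j ∈ range (m + 1), (RatFunc.X : RatFunc ℚ) ^ j) * (1 - RatFunc.X)
        = 1 - RatFunc.X ^ (m + 1) := by
      have h := geom_sum_mul (RatFunc.X : RatFunc ℚ) (m + 1)
      linear_combination -h
    have hsum : (∑ j ∈ range (m + 1), (RatFunc.X : RatFunc ℚ) ^ ((j : ℤ) - m))
        = RatFunc.X ^ (-(m : ℤ)) * ∑ j ∈ range (m + 1), RatFunc.X ^ j := by
      rw [mul_sum]
      apply Finset.sum_congr rfl
      intro j _
      rw [← zpow_natCast (RatFunc.X : RatFunc ℚ) j, ← zpow_add₀ hX]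
      congr 1
      ring
    rw [hsum, mul_assoc, hgeom,
      show (-(m : ℤ)) = -((m : ℕ) : ℤ) from rfl, zpow_neg, zpow_natCast,
      show (-(m : ℤ) - 1) = -(((m + 1 : ℕ)) : ℤ) from by push_cast; ring,
      zpow_neg, zpow_natCast]
    have hXm : (RatFunc.X : RatFunc ℚ) ^ m ≠ 0 := pow_ne_zero m hX
    have hXm1 : (RatFunc.X : RatFunc ℚ) ^ (m + 1) ≠ 0 := pow_ne_zero (m + 1) hX
    field_simp
    ring
  calc (∏ m ∈ range n, ∑ j ∈ range (m + 1), (RatFunc.X : RatFunc ℚ) ^ ((j : ℤ) - m))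
        * (1 - RatFunc.X) ^ n
      = ∏ m ∈ range n,
          ((∑ j ∈ range (m + 1), (RatFunc.X : RatFunc ℚ) ^ ((j : ℤ) - m)) * (1 - RatFunc.X)) := by
        rw [prod_mul_distrib, prod_const, card_range]
    _ = ∏ m ∈ range n, ((-RatFunc.X : RatFunc ℚ) * (1 - RatFunc.X ^ (-(m : ℤ) - 1))) :=
        Finset.prod_congr rfl (fun m _ => hTm m)
    _ = ∏ m ∈ range n,
          ((-RatFunc.X : RatFunc ℚ) * (1 - RatFunc.X ^ (-(n : ℤ)) * RatFunc.X ^ (n - 1 - m))) := by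
        apply Finset.prod_congr rfl
        intro m hm
        rw [mem_range] at hm
        congr 2
        rw [← zpow_natCast (RatFunc.X : RatFunc ℚ) (n - 1 - m), ← zpow_add₀ hX]
        congr 1
        have h1 : ((n - 1 - m : ℕ) : ℤ) = (n : ℤ) - 1 - m := by
          push_cast [Nat.cast_sub (show m ≤ n - 1 by omega), Nat.cast_sub (show 1 ≤ n by omega)]
          ring
        rw [h1]
        ring
    _ = ∏ i ∈ range n, ((-RatFunc.X : RatFunc ℚ) * (1 - RatFunc.X ^ (-(n : ℤ)) * RatFunc.X ^ i)) :=
        prod_range_reflect (fun i => (-RatFunc.X : RatFunc ℚ) *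
          (1 - RatFunc.X ^ (-(n : ℤ)) * RatFunc.X ^ i)) n
    _ = (-RatFunc.X : RatFunc ℚ) ^ n *
          ∏ i ∈ range n, (1 - RatFunc.X ^ (-(n : ℤ)) * RatFunc.X ^ i) := by
        rw [prod_mul_distrib, prod_const, card_range]
end

section
/- Let C be an n×n integer matrix whose inverse B = C^{-1} exists and has all nonnegative integer entries, and let e_1,...,e_n be nonnegative integers. The generating function ∑ x_1^{λ_1}···x_n^{λ_n}, summed over all λ ∈ ℤ_{≥0}^n satisfying C λ ≥ e componentwise, equals ∏_{j=1}^n (x_1^{b_{1,j}}···x_n^{b_{n,j}})^{e_j} / ∏_{j=1}^n (1 - x_1^{b_{1,j}}···x_n^{b_{n,j}}). -/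
open MvPowerSeries

/-- The generating function `∑_{λ ∈ S_C} x^λ` of the set `S_C` of `λ ∈ ℤ_{≥0}^n`
satisfying `Cλ ≥ e` componentwise: its coefficient on `x^λ` is 1 when `Cλ ≥ e`, else 0. -/
noncomputable def constrainedGF (n : ℕ) (C : Matrix (Fin n) (Fin n) ℤ) (e : Fin n → ℕ) :
    MvPowerSeries (Fin n) ℤ :=
  fun d => if ∀ i, (e i : ℤ) ≤ ∑ j, C i j * (d j : ℤ) then 1 else 0

open Finset in
lemma monomial_finset_prod {n : ℕ} (s : Finset (Fin n)) (g : Fin n → (Fin n →₀ ℕ)) :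
    (∏ j ∈ s, MvPowerSeries.monomial (R := ℤ) (g j) 1) = MvPowerSeries.monomial (R := ℤ) (∑ j ∈ s, g j) 1 := by
  classical
  induction s using Finset.induction with
  | empty => simp
  | insert a s h ih => simp [Finset.prod_insert h, Finset.sum_insert h, ih,
      MvPowerSeries.monomial_mul_monomial]

lemma prod_X_pow {n : ℕ} (f : Fin n → ℕ) :
    (∏ i : Fin n, (MvPowerSeries.X i : MvPowerSeries (Fin n) ℤ) ^ f i)
      = MvPowerSeries.monomial (R := ℤ) (Finsupp.equivFunOnFinite.symm f) 1 := by
  have h1 : ∀ i : Fin n, (MvPowerSeries.X i : MvPowerSeries (Fin n) ℤ) ^ f i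
      = MvPowerSeries.monomial (R := ℤ) (Finsupp.single i (f i)) 1 := fun i => MvPowerSeries.X_pow_eq i (f i)
  have h2 : (∑ j : Fin n, Finsupp.single j (f j)) = Finsupp.equivFunOnFinite.symm f := by
    ext a
    rw [Finsupp.finset_sum_apply]
    simp [Finsupp.single_apply, Finsupp.equivFunOnFinite]; rfl
  rw [Finset.prod_congr rfl (fun i _ => h1 i), monomial_finset_prod, h2]

lemma monomial_one_pow {n : ℕ} (a : Fin n →₀ ℕ) (k : ℕ) :
    (MvPowerSeries.monomial (R := ℤ) a 1) ^ k = MvPowerSeries.monomial (R := ℤ) (k • a) 1 := by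
  induction k with
  | zero => simp
  | succ k ih => rw [pow_succ, ih, MvPowerSeries.monomial_mul_monomial, mul_one, succ_nsmul]

/-- Lemma 1 (lattice-point enumeration): if `C` is an `n×n` integer matrix whose inverse
`B` has nonnegative integer entries, and `e ∈ ℤ_{≥0}^n`, then the generating function of
`{λ ∈ ℤ_{≥0}^n : Cλ ≥ e}` is `∏_j (x^{B_j})^{e_j} / ∏_j (1 - x^{B_j})`, where
`x^{B_j} = ∏_i x_i^{b_{i,j}}`.  Stated with denominators cleared. -/
theorem stmt_9 (n : ℕ) (C : Matrix (Fin n) (Fin n) ℤ) (B : Matrix (Fin n) (Fin n) ℕ)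
    (hCB : C * B.map (Nat.cast : ℕ → ℤ) = 1) (hBC : B.map (Nat.cast : ℕ → ℤ) * C = 1)
    (e : Fin n → ℕ) :
    constrainedGF n C e *
        ∏ j : Fin n, (1 - ∏ i : Fin n, (MvPowerSeries.X i : MvPowerSeries (Fin n) ℤ) ^ B i j) =
      ∏ j : Fin n,
        (∏ i : Fin n, (MvPowerSeries.X i : MvPowerSeries (Fin n) ℤ) ^ B i j) ^ e j := by
  classical
  classical
  set col : Fin n → (Fin n →₀ ℕ) := fun j => Finsupp.equivFunOnFinite.symm (fun i => B i j)
    with hcol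
  have colval : ∀ j i, col j i = B i j := fun j i => rfl
  have hy : ∀ j, (∏ i : Fin n, (MvPowerSeries.X i : MvPowerSeries (Fin n) ℤ) ^ B i j)
      = MvPowerSeries.monomial (R := ℤ) (col j) 1 := fun j => prod_X_pow _
  set σf : Finset (Fin n) → (Fin n →₀ ℕ) := fun t => ∑ j ∈ t, col j with hσ
  have σval : ∀ t j, σf t j = ∑ k ∈ t, B j k := by
    intro t j
    rw [hσ, Finsupp.finset_sum_apply]
    exact Finset.sum_congr rfl fun k _ => colval k j
  have hδ : ∀ (i k : Fin n), (∑ j, C i j * (B j k : ℤ)) = if i = k then 1 else 0 := by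
    intro i k
    have := congrArg (fun M : Matrix (Fin n) (Fin n) ℤ => M i k) hCB
    simpa [Matrix.mul_apply, Matrix.map_apply, Matrix.one_apply] using this
  have fact1 : ∀ (i : Fin n) (t : Finset (Fin n)),
      (∑ j, C i j * ((σf t j : ℕ) : ℤ)) = if i ∈ t then 1 else 0 := by
    intro i t
    have h1 : ∀ j, ((σf t j : ℕ) : ℤ) = ∑ k ∈ t, (B j k : ℤ) := by
      intro j; rw [σval]; push_cast; ring
    calc (∑ j, C i j * ((σf t j : ℕ) : ℤ)) = ∑ j, ∑ k ∈ t, C i j * (B j k : ℤ) := by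
          simp only [h1, Finset.mul_sum]
      _ = ∑ k ∈ t, ∑ j, C i j * (B j k : ℤ) := Finset.sum_comm
      _ = ∑ k ∈ t, if i = k then 1 else 0 := Finset.sum_congr rfl fun k _ => hδ i k
      _ = if i ∈ t then 1 else 0 := by simp
  have fact1' : ∀ (i : Fin n) (w : Fin n → ℕ),
      (∑ j, C i j * (((∑ k : Fin n, w k • col k) : Fin n →₀ ℕ) j : ℤ)) = (w i : ℤ) := by
    intro i w
    have h1 : ∀ j, ((((∑ k : Fin n, w k • col k) : Fin n →₀ ℕ) j : ℕ) : ℤ)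
        = ∑ k, (w k : ℤ) * (B j k : ℤ) := by
      intro j
      rw [Finsupp.finset_sum_apply, Nat.cast_sum]
      refine Finset.sum_congr rfl fun k _ => ?_
      rw [Finsupp.smul_apply, smul_eq_mul, colval]
      push_cast; ring
    calc (∑ j, C i j * (((∑ k : Fin n, w k • col k) : Fin n →₀ ℕ) j : ℤ))
        = ∑ j, ∑ k, (w k : ℤ) * (C i j * (B j k : ℤ)) := by
          simp only [h1, Finset.mul_sum]; exact Finset.sum_congr rfl fun j _ =>
            Finset.sum_congr rfl fun k _ => by ring
      _ = ∑ k, (w k : ℤ) * ∑ j, C i j * (B j k : ℤ) := by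
          rw [Finset.sum_comm]; simp [Finset.mul_sum]
      _ = (w i : ℤ) := by simp only [hδ]; simp
  have fact2 : ∀ (d : Fin n →₀ ℕ) (j : Fin n),
      ((d j : ℕ) : ℤ) = ∑ k, (B j k : ℤ) * (∑ l, C k l * (d l : ℤ)) := by
    intro d j
    have hδ' : ∀ l, (∑ k, (B j k : ℤ) * C k l) = if j = l then 1 else 0 := by
      intro l
      have := congrArg (fun M : Matrix (Fin n) (Fin n) ℤ => M j l) hBC
      simpa [Matrix.mul_apply, Matrix.map_apply, Matrix.one_apply] using this
    calc ((d j : ℕ) : ℤ) = ∑ l, (if j = l then 1 else 0) * (d l : ℤ) := by simp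
      _ = ∑ l, (∑ k, (B j k : ℤ) * C k l) * (d l : ℤ) := by
          refine Finset.sum_congr rfl fun l _ => ?_; rw [hδ']
      _ = ∑ k, (B j k : ℤ) * (∑ l, C k l * (d l : ℤ)) := by
          simp only [Finset.sum_mul, Finset.mul_sum]
          rw [Finset.sum_comm]
          exact Finset.sum_congr rfl fun k _ => Finset.sum_congr rfl fun l _ => by ring
  ext d
  set m : Fin n → ℤ := fun i => ∑ j, C i j * (d j : ℤ) with hm
  have hrhs : (MvPowerSeries.coeff (R := ℤ) d) (∏ j : Fin n,
      (∏ i : Fin n, (MvPowerSeries.X i : MvPowerSeries (Fin n) ℤ) ^ B i j) ^ e j)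
      = if d = ∑ j : Fin n, e j • col j then 1 else 0 := by
    simp only [hy, monomial_one_pow]
    rw [monomial_finset_prod, MvPowerSeries.coeff_monomial]
  -- the key computation for each subset t
  have hcomp : ∀ t : Finset (Fin n), σf t ≤ d → ∀ i,
      (∑ j, C i j * (((d - σf t) j : ℕ) : ℤ)) = m i - (if i ∈ t then 1 else 0) := by
    intro t hle i
    have hsub : ∀ j, (((d - σf t) j : ℕ) : ℤ) = (d j : ℤ) - ((σf t j : ℕ) : ℤ) := by
      intro j; rw [Finsupp.tsub_apply, Nat.cast_sub (hle j)]
    simp only [hsub, mul_sub, Finset.sum_sub_distrib, fact1, hm]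
  have key : ∀ t : Finset (Fin n),
      (if σf t ≤ d then (MvPowerSeries.coeff (R := ℤ) (d - σf t)) (constrainedGF n C e) else 0)
        = if ∀ i, (e i : ℤ) + (if i ∈ t then 1 else 0) ≤ m i then 1 else 0 := by
    intro t
    have hGF : ∀ u : Fin n →₀ ℕ, (MvPowerSeries.coeff (R := ℤ) u) (constrainedGF n C e)
        = if ∀ i, (e i : ℤ) ≤ ∑ j, C i j * (u j : ℤ) then 1 else 0 := fun u => rfl
    by_cases hc : ∀ i, (e i : ℤ) + (if i ∈ t then 1 else 0) ≤ m i
    · have hle : σf t ≤ d := by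
        rw [Finsupp.le_def]
        intro j
        have hind : ((σf t j : ℕ) : ℤ) = ∑ k, (B j k : ℤ) * (if k ∈ t then 1 else 0) := by
          rw [σval, Nat.cast_sum]
          symm
          calc ∑ k, (B j k : ℤ) * (if k ∈ t then 1 else 0)
              = ∑ k, (if k ∈ t then (B j k : ℤ) else 0) := by
                refine Finset.sum_congr rfl fun k _ => ?_
                rw [mul_ite, mul_one, mul_zero]
            _ = ∑ k ∈ t, (B j k : ℤ) := by rw [Finset.sum_ite_mem, Finset.univ_inter]
        have hnn : (0:ℤ) ≤ (d j : ℤ) - ((σf t j : ℕ) : ℤ) := by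
          rw [fact2 d j, hind, ← Finset.sum_sub_distrib]
          refine Finset.sum_nonneg fun k _ => ?_
          rw [← mul_sub]
          refine mul_nonneg (Int.natCast_nonneg _) ?_
          have h1 := hc k
          have h2 : (0:ℤ) ≤ (e k : ℤ) := Int.natCast_nonneg _
          linarith
        exact_mod_cast (by linarith : ((σf t j : ℕ) : ℤ) ≤ (d j : ℤ))
      rw [if_pos hle, hGF, if_pos, if_pos hc]
      intro i
      rw [hcomp t hle i]
      have := hc i
      linarith
    · rw [if_neg hc]
      by_cases hle : σf t ≤ d
      · rw [if_pos hle, hGF, if_neg]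
        intro hcond
        apply hc
        intro i
        have := hcond i
        rw [hcomp t hle i] at this
        linarith
      · rw [if_neg hle]
  have hlhs : (MvPowerSeries.coeff (R := ℤ) d) (constrainedGF n C e *
      ∏ j : Fin n, (1 - ∏ i : Fin n, (MvPowerSeries.X i : MvPowerSeries (Fin n) ℤ) ^ B i j))
      = ∑ t ∈ (Finset.univ : Finset (Fin n)).powerset,
          (-1 : ℤ) ^ t.card *
            (if ∀ i, (e i : ℤ) + (if i ∈ t then 1 else 0) ≤ m i then 1 else 0) := by
    simp only [hy]
    rw [Finset.prod_sub (fun _ => (1 : MvPowerSeries (Fin n) ℤ))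
      (fun j => MvPowerSeries.monomial (R := ℤ) (col j) 1) Finset.univ]
    simp only [Finset.prod_const_one, mul_one]
    rw [Finset.mul_sum, map_sum]
    refine Finset.sum_congr rfl fun t _ => ?_
    rw [monomial_finset_prod]
    have hC : ((-1 : MvPowerSeries (Fin n) ℤ)) ^ t.card
        = MvPowerSeries.C (σ := Fin n) (R := ℤ) ((-1 : ℤ) ^ t.card) := by
      rw [map_pow, map_neg, map_one]
    rw [hC, mul_left_comm, MvPowerSeries.coeff_C_mul, MvPowerSeries.coeff_mul_monomial]
    rw [← key t]
    by_cases hle : σf t ≤ d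
    · rw [if_pos hle, if_pos hle, mul_one]
    · rw [if_neg hle, if_neg hle]
  rw [hlhs, hrhs]
  have dir2 : d = ∑ k : Fin n, e k • col k → ∀ i, m i = (e i : ℤ) := by
    intro h i
    rw [hm]
    simp only [h]
    exact fact1' i e
  by_cases hbase : ∀ i, (e i : ℤ) ≤ m i
  · set T : Finset (Fin n) := Finset.univ.filter (fun i => (e i : ℤ) + 1 ≤ m i) with hT
    have hTsub : ∀ t : Finset (Fin n),
        (∀ i, (e i : ℤ) + (if i ∈ t then 1 else 0) ≤ m i) ↔ t ∈ T.powerset := by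
      intro t
      rw [Finset.mem_powerset]
      constructor
      · intro h i hi
        rw [hT, Finset.mem_filter]
        refine ⟨Finset.mem_univ i, ?_⟩
        have := h i
        rw [if_pos hi] at this
        linarith
      · intro h i
        by_cases hi : i ∈ t
        · rw [if_pos hi]
          have := h hi
          rw [hT, Finset.mem_filter] at this
          exact this.2
        · rw [if_neg hi]
          have := hbase i
          linarith
    have step1 : (∑ t ∈ (Finset.univ : Finset (Fin n)).powerset,
        (-1 : ℤ) ^ t.card *
          (if ∀ i, (e i : ℤ) + (if i ∈ t then 1 else 0) ≤ m i then 1 else 0))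
        = if T = ∅ then 1 else 0 := by
      calc (∑ t ∈ (Finset.univ : Finset (Fin n)).powerset,
          (-1 : ℤ) ^ t.card *
            (if ∀ i, (e i : ℤ) + (if i ∈ t then 1 else 0) ≤ m i then 1 else 0))
          = ∑ t ∈ (Finset.univ : Finset (Fin n)).powerset,
              (if t ∈ T.powerset then (-1 : ℤ) ^ t.card else 0) := by
            refine Finset.sum_congr rfl fun t _ => ?_
            rw [if_congr (hTsub t) rfl rfl, mul_ite, mul_one, mul_zero]
        _ = ∑ t ∈ (Finset.univ : Finset (Fin n)).powerset ∩ T.powerset, (-1 : ℤ) ^ t.card :=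
            Finset.sum_ite_mem _ _ _
        _ = ∑ t ∈ T.powerset, (-1 : ℤ) ^ t.card := by
            rw [Finset.inter_eq_right.mpr (Finset.powerset_mono.mpr (Finset.subset_univ T))]
        _ = if T = ∅ then 1 else 0 := Finset.sum_powerset_neg_one_pow_card
    rw [step1]
    have hiff : (T = ∅) ↔ (d = ∑ j : Fin n, e j • col j) := by
      constructor
      · intro h
        have hme : ∀ i, m i = (e i : ℤ) := by
          intro i
          have : i ∉ T := h ▸ Finset.notMem_empty i
          rw [hT, Finset.mem_filter] at this
          push_neg at this
          have h2 := this (Finset.mem_univ i)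
          have := hbase i
          linarith
        ext j
        have : ((d j : ℕ) : ℤ) = (((∑ k : Fin n, e k • col k) : Fin n →₀ ℕ) j : ℤ) := by
          rw [fact2 d j]
          have h1 : ((((∑ k : Fin n, e k • col k) : Fin n →₀ ℕ) j : ℕ) : ℤ)
              = ∑ k, (B j k : ℤ) * (e k : ℤ) := by
            rw [Finsupp.finset_sum_apply, Nat.cast_sum]
            refine Finset.sum_congr rfl fun k _ => ?_
            rw [Finsupp.smul_apply, smul_eq_mul, colval]
            push_cast; ring
          rw [h1]
          refine Finset.sum_congr rfl fun k _ => ?_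
          have h2 : (∑ l, C k l * ((d l : ℕ) : ℤ)) = (e k : ℤ) := hme k
          rw [h2]
        exact_mod_cast this
      · intro h
        rw [hT, Finset.filter_eq_empty_iff]
        intro i _
        have := dir2 h i
        linarith
    rw [if_congr hiff rfl rfl]
  · have step0 : (∑ t ∈ (Finset.univ : Finset (Fin n)).powerset,
        (-1 : ℤ) ^ t.card *
          (if ∀ i, (e i : ℤ) + (if i ∈ t then 1 else 0) ≤ m i then 1 else 0)) = 0 := by
      refine Finset.sum_eq_zero fun t _ => ?_
      rw [if_neg, mul_zero]
      intro h
      apply hbase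
      intro i
      have := h i
      by_cases hi : i ∈ t
      · rw [if_pos hi] at this; linarith
      · rw [if_neg hi] at this; linarith
    rw [step0, if_neg]
    intro h
    apply hbase
    intro i
    rw [dir2 h i]
end

section
/- For n ≥ 2 and b ≥ 1, the generating function F(q) = ∑ q^{λ_1+...+λ_n}, summed over all λ ∈ ℤ_{≥0}^n such that (nb-b+1)λ_{π(n)} ≥ b(λ_{π(1)}+...+λ_{π(n-1)}) for every permutation π ∈ S_n, equals (1 - q^{n(nb+1)}) / ((1-q^n)(1 - q^{nb+1})^n). -/
noncomputable def Gs (a j : ℕ) : PowerSeries ℤ :=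
  PowerSeries.mk fun N => if a ∣ N then ((N/a + j - 1).choose (j-1) : ℤ) else 0

lemma coeff_mul_one_sub_pow (P : PowerSeries ℤ) (a N : ℕ) :
    (PowerSeries.coeff N) (P * (1 - PowerSeries.X^a)) =
      PowerSeries.coeff N P - if a ≤ N then PowerSeries.coeff (N-a) P else 0 := by
  rw [mul_sub, mul_one, map_sub, PowerSeries.coeff_mul_X_pow']

lemma dvd_sub_self_iff {a N : ℕ} (hN : a ≤ N) : a ∣ N - a ↔ a ∣ N := by
  constructor
  · intro h; have := Nat.dvd_add h (dvd_refl a); rwa [Nat.sub_add_cancel hN] at this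
  · intro h; exact Nat.dvd_sub h dvd_rfl

lemma Gs_step (a j : ℕ) (ha : 1 ≤ a) (hj : 1 ≤ j) :
    Gs a (j+1) * (1 - PowerSeries.X^a) = Gs a j := by
  ext N
  rw [coeff_mul_one_sub_pow]
  simp only [Gs, PowerSeries.coeff_mk]
  by_cases hd : a ∣ N
  · by_cases hN : a ≤ N
    · have hd' : a ∣ N - a := Nat.dvd_sub hd dvd_rfl
      obtain ⟨m, hm⟩ : ∃ m, N - a = a * m := hd'
      have hd' : a ∣ N - a := ⟨m, hm⟩
      have hm2 : (N - a) / a = m := by rw [hm, Nat.mul_div_cancel_left _ (by omega)]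
      have hNa : N / a = m + 1 := by
        have hN' : N = a * (m + 1) := by rw [Nat.mul_add, ← hm]; omega
        rw [hN', Nat.mul_div_cancel_left _ (by omega)]
      simp only [if_pos hd, if_pos hd', if_pos hN, hNa, hm2]
      obtain ⟨j', rfl⟩ : ∃ j', j = j' + 1 := ⟨j - 1, by omega⟩
      have hP : (m + 1 + (j'+1+1) - 1).choose (j'+1+1-1) =
          (m + (j'+1+1) - 1).choose (j'+1+1-1) + (m + 1 + (j'+1) - 1).choose (j'+1-1) := by
        have e1 : m + 1 + (j'+1+1) - 1 = (m + j' + 1) + 1 := by omega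
        have e2 : j' + 1 + 1 - 1 = j' + 1 := by omega
        have e3 : m + (j'+1+1) - 1 = m + j' + 1 := by omega
        have e4 : m + 1 + (j'+1) - 1 = m + j' + 1 := by omega
        have e5 : j' + 1 - 1 = j' := by omega
        rw [e1, e2, e3, e4, e5]
        have := Nat.choose_succ_succ (m + j' + 1) j'
        simp only [Nat.succ_eq_add_one] at this
        omega
      rw [hP]
      push_cast
      ring
    · have hN0 : N = 0 := by
        obtain ⟨c, rfl⟩ := hd
        rcases Nat.eq_zero_or_pos c with h|h
        · simp [h]
        · exact absurd (Nat.le_mul_of_pos_right a h) hN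
      subst hN0
      simp only [if_pos hd, if_neg hN]
      norm_num
  · have hd' : ¬ (a ≤ N) ∨ ¬ (a ∣ N - a) := by
      by_cases hN : a ≤ N
      · exact Or.inr (fun hc => hd ((dvd_sub_self_iff hN).mp hc))
      · exact Or.inl hN
    rcases hd' with h|h
    · simp [hd, h]
    · by_cases hN : a ≤ N <;> simp [hd, h, hN]

lemma Gs_one (a : ℕ) (ha : 1 ≤ a) : Gs a 1 * (1 - PowerSeries.X^a) = 1 := by
  ext N
  rw [coeff_mul_one_sub_pow]
  simp only [Gs, PowerSeries.coeff_mk, PowerSeries.coeff_one]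
  by_cases hN0 : N = 0
  · subst hN0
    simp only [if_pos (dvd_zero a), if_neg (by omega : ¬ a ≤ 0), if_pos rfl]
    norm_num
  · by_cases hd : a ∣ N
    · have hN : a ≤ N := Nat.le_of_dvd (by omega) hd
      have hd' : a ∣ N - a := Nat.dvd_sub hd dvd_rfl
      simp only [if_pos hd, if_pos hd', if_pos hN, if_neg hN0]
      norm_num
    · have hd' : ¬ (a ≤ N) ∨ ¬ (a ∣ N - a) := by
        by_cases hN : a ≤ N
        · exact Or.inr (fun hc => hd ((dvd_sub_self_iff hN).mp hc))
        · exact Or.inl hN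
      rcases hd' with h|h
      · simp [hd, h, hN0]
      · by_cases hN : a ≤ N <;> simp [hd, h, hN, hN0]

lemma Gs_inv (a : ℕ) (ha : 1 ≤ a) : ∀ j, 1 ≤ j → Gs a j * (1 - PowerSeries.X^a)^j = 1 := by
  intro j
  induction j with
  | zero => omega
  | succ j ih =>
    intro _
    rcases Nat.eq_zero_or_pos j with h|h
    · subst h; simpa using Gs_one a ha
    · calc Gs a (j+1) * (1 - PowerSeries.X^a)^(j+1)
          = (Gs a (j+1) * (1 - PowerSeries.X^a)) * (1 - PowerSeries.X^a)^j := by ring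
        _ = Gs a j * (1 - PowerSeries.X^a)^j := by rw [Gs_step a j ha h]
        _ = 1 := ih h

lemma ineq_fwd (n b M x : ℕ) (hn : 2 ≤ n) (hx : x ≤ M)
    (h : b * (M - x) ≤ (n * b - b + 1) * x) : b * M ≤ (n * b + 1) * x := by
  have hbnb : b ≤ n * b := Nat.le_mul_of_pos_left b (by omega)
  calc b * M = b * (M - x + x) := by rw [Nat.sub_add_cancel hx]
    _ = b * (M - x) + b * x := by ring
    _ ≤ (n * b - b + 1) * x + b * x := by exact Nat.add_le_add_right h _
    _ = (n * b - b + 1 + b) * x := by ring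
    _ = (n * b + 1) * x := by congr 1; omega

lemma ineq_bwd (n b M x : ℕ) (hn : 2 ≤ n) (hx : x ≤ M)
    (h : b * M ≤ (n * b + 1) * x) : b * (M - x) ≤ (n * b - b + 1) * x := by
  have hbnb : b ≤ n * b := Nat.le_mul_of_pos_left b (by omega)
  have e1 : b * (M - x) + b * x = b * M := by
    rw [← Nat.mul_add, Nat.sub_add_cancel hx]
  have e2 : (n * b + 1) * x = (n * b - b + 1) * x + b * x := by
    rw [← Nat.add_mul]; congr 1; omega
  omega

lemma cond_iff (n b M : ℕ) (hn : 2 ≤ n) (p : Fin n) (l : Fin n → ℕ)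
    (hsum : ∑ i, l i = M) :
    (∀ π : Equiv.Perm (Fin n),
        b * ∑ i ∈ Finset.univ.erase p, l (π i) ≤ (n * b - b + 1) * l (π p)) ↔
      ∀ j, b * M ≤ (n * b + 1) * l j := by
  have hle : ∀ j : Fin n, l j ≤ M := by
    intro j
    rw [← hsum]
    exact Finset.single_le_sum (fun i _ => Nat.zero_le _) (Finset.mem_univ j)
  have hpart : ∀ π : Equiv.Perm (Fin n),
      ∑ i ∈ Finset.univ.erase p, l (π i) = M - l (π p) := by
    intro π
    have h1 : ∑ i, l (π i) = M := by rw [Equiv.sum_comp π l, hsum]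
    have h2 := Finset.add_sum_erase Finset.univ (fun i => l (π i)) (Finset.mem_univ p)
    omega
  constructor
  · intro h j
    have := h (Equiv.swap p j)
    rw [hpart, Equiv.swap_apply_left] at this
    exact ineq_fwd n b M (l j) hn (hle j) this
  · intro h π
    rw [hpart]
    exact ineq_bwd n b M (l (π p)) hn (hle _) (h (π p))

lemma stars_bars (j m : ℕ) (hj : 1 ≤ j) :
    (Finset.piAntidiag (Finset.univ : Finset (Fin j)) m).card = (m + j - 1).choose (j-1) := by
  have h1 : (Finset.univ : Finset (Fin j)).sym m = Finset.univ := by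
    ext x; simp [Finset.mem_sym_iff]
  rw [← Finset.map_sym_eq_piAntidiag, Finset.card_map, h1, Finset.card_univ,
    Sym.card_sym_eq_choose, Fintype.card_fin]
  rw [← Nat.choose_symm (by omega : m ≤ j + m - 1)]
  congr 1 <;> omega

lemma card_eq (n b M : ℕ) (hn : 2 ≤ n) (hb : 1 ≤ b) (p : Fin n) :
    ((Fintype.piFinset fun _ : Fin n => Finset.range (M + 1)).filter
      (fun l => ∑ i, l i = M ∧ ∀ π : Equiv.Perm (Fin n),
        b * ∑ i ∈ Finset.univ.erase p, l (π i) ≤ (n * b - b + 1) * l (π p))).card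
    = if n * ((b * M + n * b) / (n * b + 1)) ≤ M
      then (M - n * ((b * M + n * b) / (n * b + 1)) + n - 1).choose (n - 1) else 0 := by
  obtain ⟨t, ht⟩ : ∃ t, t = (b * M + n * b) / (n * b + 1) := ⟨_, rfl⟩
  rw [← ht]
  have hdm := Nat.div_add_mod (b * M + n * b) (n * b + 1)
  have hmod := Nat.mod_lt (b * M + n * b) (show 0 < n * b + 1 by omega)
  rw [← ht] at hdm
  have ht1 : b * M ≤ (n * b + 1) * t := by omega
  have ht2 : (n * b + 1) * t ≤ b * M + n * b := by omega
  clear hdm hmod ht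
  -- membership characterization
  have hmem : ∀ l : Fin n → ℕ,
      (l ∈ (Fintype.piFinset fun _ : Fin n => Finset.range (M + 1)).filter
        (fun l => ∑ i, l i = M ∧ ∀ π : Equiv.Perm (Fin n),
          b * ∑ i ∈ Finset.univ.erase p, l (π i) ≤ (n * b - b + 1) * l (π p))) ↔
      (∑ i, l i = M ∧ ∀ j, t ≤ l j) := by
    intro l
    rw [Finset.mem_filter]
    constructor
    · rintro ⟨-, hsum, hperm⟩
      refine ⟨hsum, fun j => ?_⟩
      have hj := (cond_iff n b M hn p l hsum).mp hperm j
      -- (n*b+1)*t ≤ b*M + n*b ≤ (n*b+1)*l j + n*b < (n*b+1)*(l j + 1)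
      have : (n * b + 1) * t < (n * b + 1) * (l j + 1) := by
        have e : (n * b + 1) * (l j + 1) = (n * b + 1) * l j + (n * b + 1) := by ring
        omega
      have := Nat.lt_of_mul_lt_mul_left this
      omega
    · rintro ⟨hsum, hge⟩
      have hle : ∀ j : Fin n, l j ≤ M := by
        intro j
        rw [← hsum]
        exact Finset.single_le_sum (fun i _ => Nat.zero_le _) (Finset.mem_univ j)
      refine ⟨?_, hsum, (cond_iff n b M hn p l hsum).mpr fun j => ?_⟩
      · simp only [Fintype.mem_piFinset, Finset.mem_range]
        intro j; exact Nat.lt_succ_of_le (hle j)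
      · calc b * M ≤ (n * b + 1) * t := ht1
          _ ≤ (n * b + 1) * l j := Nat.mul_le_mul_left _ (hge j)
  by_cases hc : n * t ≤ M
  · rw [if_pos hc, ← stars_bars n (M - n * t) (by omega)]
    apply Finset.card_nbij' (fun l j => l j - t) (fun μ j => μ j + t)
    · intro l hl
      obtain ⟨hsum, hge⟩ := (hmem l).mp hl
      simp only [Finset.mem_coe, Finset.mem_piAntidiag]
      refine ⟨?_, fun i _ => Finset.mem_univ i⟩
      rw [Finset.sum_tsub_distrib _ (fun i _ => hge i), hsum, Finset.sum_const,
        Finset.card_univ, Fintype.card_fin, smul_eq_mul]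
    · intro μ hμ
      rw [Finset.mem_coe, Finset.mem_piAntidiag] at hμ
      obtain ⟨hsum, -⟩ := hμ
      rw [Finset.mem_coe, hmem]
      constructor
      · rw [Finset.sum_add_distrib, hsum, Finset.sum_const, Finset.card_univ,
          Fintype.card_fin, smul_eq_mul]
        omega
      · intro j; show t ≤ μ j + t; omega
    · intro l hl
      obtain ⟨-, hge⟩ := (hmem l).mp hl
      funext j
      have := hge j
      change l j - t + t = l j
      omega
    · intro μ hμ
      funext j
      change μ j + t - t = μ j
      omega
  · rw [if_neg hc]
    rw [Finset.card_eq_zero, Finset.eq_empty_iff_forall_notMem]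
    intro l hl
    obtain ⟨hsum, hge⟩ := (hmem l).mp hl
    have : Finset.univ.card • t ≤ ∑ i, l i :=
      Finset.card_nsmul_le_sum Finset.univ l t (fun i _ => hge i)
    rw [Finset.card_univ, Fintype.card_fin, smul_eq_mul, hsum] at this
    omega

lemma sum_eq (n b M : ℕ) (hn : 2 ≤ n) (hb : 1 ≤ b) :
    (∑ k ∈ Finset.range (n * b + 1),
      if n * k ≤ M then
        (if (n * b + 1) ∣ (M - n * k)
          then (((M - n * k) / (n * b + 1) + n - 1).choose (n - 1) : ℤ) else 0)
      else 0)
    = if n * ((b * M + n * b) / (n * b + 1)) ≤ M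
      then ((M - n * ((b * M + n * b) / (n * b + 1)) + n - 1).choose (n - 1) : ℤ) else 0 := by
  obtain ⟨t, ht⟩ : ∃ t, t = (b * M + n * b) / (n * b + 1) := ⟨_, rfl⟩
  rw [← ht]
  have hdm := Nat.div_add_mod (b * M + n * b) (n * b + 1)
  have hmod := Nat.mod_lt (b * M + n * b) (show 0 < n * b + 1 by omega)
  rw [← ht] at hdm
  have ht1 : b * M ≤ (n * b + 1) * t := by omega
  have ht2 : (n * b + 1) * t ≤ b * M + n * b := by omega
  clear hdm hmod ht
  have hcop : Nat.Coprime (n * b + 1) n := by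
    have := (Nat.coprime_mul_left_add_left 1 n b).mpr (Nat.coprime_one_left n)
    simpa using this
  by_cases hc : n * t ≤ M
  · rw [if_pos hc]
    obtain ⟨k₀, hk0, hk0b⟩ : ∃ k, (n * b + 1) * t = b * M + k ∧ k ≤ n * b :=
      ⟨(n * b + 1) * t - b * M, by omega, by omega⟩
    have key : n * k₀ + (n * b + 1) * (M - n * t) = M := by
      zify [hc]
      have hk0z : ((n : ℤ) * b + 1) * t = b * M + k₀ := by exact_mod_cast hk0
      linear_combination (-(n : ℤ)) * hk0z
    rw [Finset.sum_eq_single_of_mem k₀ (Finset.mem_range.mpr (by omega))]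
    · have h1 : n * k₀ ≤ M := by omega
      have h2 : M - n * k₀ = (n * b + 1) * (M - n * t) := by omega
      have h3 : (n * b + 1) ∣ (M - n * k₀) := ⟨M - n * t, h2⟩
      rw [if_pos h1, if_pos h3, h2, Nat.mul_div_cancel_left _ (by omega : 0 < n * b + 1)]
    · intro k hk hne
      rw [Finset.mem_range] at hk
      split_ifs with h1 h2
      · exfalso
        obtain ⟨m', hm'⟩ := h2
        apply hne
        have hM1 : M = n * k + (n * b + 1) * m' := by omega
        have hM1z : (M : ℤ) = n * k + ((n : ℤ) * b + 1) * m' := by exact_mod_cast hM1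
        have keyz : (n : ℤ) * k₀ + ((n : ℤ) * b + 1) * ((M : ℤ) - n * t) = M := by
          have h' := key
          zify [hc] at h'
          exact_mod_cast h'
        have hdvd : ((n * b + 1 : ℕ) : ℤ) ∣ (n : ℤ) * ((k : ℤ) - (k₀ : ℤ)) := by
          refine ⟨((M : ℤ) - (n : ℤ) * (t : ℤ)) - (m' : ℤ), ?_⟩
          push_cast
          linear_combination -hM1z - keyz
        have hcopz : IsCoprime ((n * b + 1 : ℕ) : ℤ) ((n : ℕ) : ℤ) := by
          rw [Int.isCoprime_iff_gcd_eq_one, Int.gcd_natCast_natCast]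
          exact hcop
        obtain ⟨c, hcc⟩ := hcopz.dvd_of_dvd_mul_left hdvd
        have ha : (0 : ℤ) < ((n * b + 1 : ℕ) : ℤ) := by positivity
        have hb1 : ((k₀ : ℤ)) ≤ (n : ℤ) * b := by exact_mod_cast hk0b
        have hb2 : ((k : ℤ)) < ((n * b + 1 : ℕ) : ℤ) := by exact_mod_cast hk
        have hk00 : (0 : ℤ) ≤ (k₀ : ℤ) := Int.ofNat_nonneg k₀
        have hkk : (0 : ℤ) ≤ (k : ℤ) := Int.ofNat_nonneg k
        have hc0 : c = 0 := by
          by_contra hc0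
          rcases lt_or_gt_of_ne hc0 with h | h
          · have h2 : ((n * b + 1 : ℕ) : ℤ) * c ≤ -((n * b + 1 : ℕ) : ℤ) := by nlinarith
            push_cast at hcc h2 hb2 ⊢
            linarith
          · have h2 : ((n * b + 1 : ℕ) : ℤ) ≤ ((n * b + 1 : ℕ) : ℤ) * c := by nlinarith
            push_cast at hcc h2 hb2 ⊢
            linarith
        rw [hc0, mul_zero] at hcc
        omega
      · rfl
      · rfl
  · rw [if_neg hc]
    apply Finset.sum_eq_zero
    intro k hk
    rw [Finset.mem_range] at hk
    split_ifs with h1 h2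
    · exfalso
      obtain ⟨m', hm'⟩ := h2
      have hM1 : M = n * k + (n * b + 1) * m' := by omega
      have e : (n * b + 1) * (k + b * m') = b * M + k := by rw [hM1]; ring
      have e2 : (n * b + 1) * (k + b * m' + 1) = (n * b + 1) * (k + b * m') + (n * b + 1) := by
        ring
      have e3 : (n * b + 1) * (t + 1) = (n * b + 1) * t + (n * b + 1) := by ring
      have u1 : (n * b + 1) * t < (n * b + 1) * (k + b * m' + 1) := by omega
      have u2 : (n * b + 1) * (k + b * m') < (n * b + 1) * (t + 1) := by omega
      have v1 := Nat.lt_of_mul_lt_mul_left u1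
      have v2 := Nat.lt_of_mul_lt_mul_left u2
      have teq : t = k + b * m' := by omega
      have e4 : n * (k + b * m') = n * k + n * (b * m') := by ring
      have e5 : (n * b + 1) * m' = n * (b * m') + m' := by ring
      have e6 : n * t = n * (k + b * m') := by rw [teq]
      omega
    · rfl
    · rfl

lemma geom_aux (n a : ℕ) :
    (∑ k ∈ Finset.range a, (PowerSeries.X : PowerSeries ℤ) ^ (n * k)) *
      (1 - PowerSeries.X ^ n) = 1 - PowerSeries.X ^ (n * a) := by
  have := geom_sum_mul_neg ((PowerSeries.X : PowerSeries ℤ) ^ n) a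
  simpa [pow_mul] using this

/-- Example 1: for `n ≥ 2`, `b ≥ 1`, the generating function `∑_λ q^{λ₁+⋯+λₙ}` over
`λ ∈ ℤ_{≥0}^n` with `(nb-b+1)λ_{π(n)} ≥ b(λ_{π(1)}+⋯+λ_{π(n-1)})` for all `π ∈ Sₙ`
equals `(1 - q^{n(nb+1)}) / ((1-q^n)(1-q^{nb+1})^n)`; stated with denominators cleared,
the coefficient of `q^M` being the number of such `λ` with `|λ| = M`. -/
theorem stmt_11 (n b : ℕ) (hn : 2 ≤ n) (hb : 1 ≤ b) :
    (PowerSeries.mk fun M =>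
        ((((Fintype.piFinset fun _ : Fin n => Finset.range (M + 1)).filter
          (fun l => ∑ i, l i = M ∧ ∀ π : Equiv.Perm (Fin n),
            b * ∑ i ∈ Finset.univ.erase (⟨n - 1, by omega⟩ : Fin n), l (π i) ≤
              (n * b - b + 1) * l (π ⟨n - 1, by omega⟩))).card : ℤ))) *
      ((1 - (PowerSeries.X : PowerSeries ℤ) ^ n) * (1 - PowerSeries.X ^ (n * b + 1)) ^ n) =
    1 - (PowerSeries.X : PowerSeries ℤ) ^ (n * (n * b + 1)) := by
  have hF : (PowerSeries.mk fun M =>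
        ((((Fintype.piFinset fun _ : Fin n => Finset.range (M + 1)).filter
          (fun l => ∑ i, l i = M ∧ ∀ π : Equiv.Perm (Fin n),
            b * ∑ i ∈ Finset.univ.erase (⟨n - 1, by omega⟩ : Fin n), l (π i) ≤
              (n * b - b + 1) * l (π ⟨n - 1, by omega⟩))).card : ℤ))) =
      (∑ k ∈ Finset.range (n * b + 1), (PowerSeries.X : PowerSeries ℤ) ^ (n * k)) *
        Gs (n * b + 1) n := by
    ext M
    rw [PowerSeries.coeff_mk, card_eq n b M hn hb ⟨n - 1, by omega⟩,
      apply_ite (Nat.cast : ℕ → ℤ), Nat.cast_zero, ← sum_eq n b M hn hb,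
      Finset.sum_mul, map_sum]
    apply Finset.sum_congr rfl
    intro k _
    rw [PowerSeries.coeff_X_pow_mul']
    simp only [Gs, PowerSeries.coeff_mk]
  rw [hF]
  have h1 := Gs_inv (n * b + 1) (by omega) n (by omega)
  have h2 := geom_aux n (n * b + 1)
  calc (∑ k ∈ Finset.range (n * b + 1), (PowerSeries.X : PowerSeries ℤ) ^ (n * k)) *
          Gs (n * b + 1) n *
        ((1 - (PowerSeries.X : PowerSeries ℤ) ^ n) * (1 - PowerSeries.X ^ (n * b + 1)) ^ n)
      = ((∑ k ∈ Finset.range (n * b + 1), (PowerSeries.X : PowerSeries ℤ) ^ (n * k)) *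
          (1 - PowerSeries.X ^ n)) *
        (Gs (n * b + 1) n * (1 - PowerSeries.X ^ (n * b + 1)) ^ n) := by ring
    _ = (1 - (PowerSeries.X : PowerSeries ℤ) ^ (n * (n * b + 1))) * 1 := by rw [h1, h2]
    _ = 1 - (PowerSeries.X : PowerSeries ℤ) ^ (n * (n * b + 1)) := mul_one _
end

section
/- For n ≥ 2 and b ≥ 1, the generating function F(q) = ∑ q^{λ_1+...+λ_n}, over all λ ∈ ℤ_{≥0}^n satisfying b(λ_{π(2)}+...+λ_{π(n)}) ≥ (nb-b-1)λ_{π(1)} for every π ∈ S_n, equals (1 - q^{n(nb-1)}) / ((1-q^n)(1 - q^{nb-1})^n). -/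
open Finset PowerSeries

private def cntSet (n m j M : ℕ) : Finset (ℕ × (Fin j → ℕ)) :=
  (Finset.range m ×ˢ Fintype.piFinset fun _ : Fin j => Finset.range (M + 1)).filter
    (fun p => p.1 * n + m * ∑ i, p.2 i = M)

private lemma mem_cntSet {n m j M : ℕ} {p : ℕ × (Fin j → ℕ)} :
    p ∈ cntSet n m j M ↔ (p.1 < m ∧ ∀ i, p.2 i ≤ M) ∧ p.1 * n + m * ∑ i, p.2 i = M := by
  simp [cntSet, Fintype.mem_piFinset, Nat.lt_succ_iff]

private lemma cnt_peel {n m j M : ℕ} (hm : 0 < m) :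
    (cntSet n m (j+1) M).card
      = (cntSet n m j M).card + if m ≤ M then (cntSet n m (j+1) (M - m)).card else 0 := by
  classical
  rw [← Finset.card_filter_add_card_filter_not (s := cntSet n m (j+1) M)
    (p := fun p => p.2 0 = 0)]
  congr 1
  · -- tuples with first entry 0  ↔  j-tuples
    apply Finset.card_nbij' (i := fun p => (p.1, fun i => p.2 i.succ))
      (j := fun q => (q.1, Fin.cons 0 q.2))
    · intro p hp
      rw [Finset.mem_coe, Finset.mem_filter, mem_cntSet] at hp
      obtain ⟨⟨⟨hk, hb⟩, hcond⟩, h0⟩ := hp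
      rw [Fin.sum_univ_succ, h0, zero_add] at hcond
      exact mem_cntSet.mpr ⟨⟨hk, fun i => hb _⟩, hcond⟩
    · intro q hq
      rw [Finset.mem_coe, mem_cntSet] at hq
      obtain ⟨⟨hk, hb⟩, hcond⟩ := hq
      rw [Finset.mem_coe, Finset.mem_filter, mem_cntSet]
      refine ⟨⟨⟨hk, fun i => ?_⟩, ?_⟩, by simp⟩
      · induction i using Fin.cases with
        | zero => simp
        | succ i => simpa using hb i
      · rw [Fin.sum_univ_succ]
        simpa using hcond
    · intro p hp
      rw [Finset.mem_coe, Finset.mem_filter] at hp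
      obtain ⟨-, h0⟩ := hp
      refine Prod.ext rfl ?_
      funext i
      induction i using Fin.cases with
      | zero => simpa using h0.symm
      | succ i => simp
    · intro q hq
      refine Prod.ext rfl ?_
      funext i
      simp
  · split_ifs with hM
    · apply Finset.card_nbij'
        (i := fun p => (p.1, Function.update p.2 0 (p.2 0 - 1)))
        (j := fun q => (q.1, Function.update q.2 0 (q.2 0 + 1)))
      · intro p hp
        rw [Finset.mem_coe, Finset.mem_filter, mem_cntSet] at hp
        obtain ⟨⟨⟨hk, hb⟩, hcond⟩, h0⟩ := hp
        have h0' : 1 ≤ p.2 0 := Nat.one_le_iff_ne_zero.mpr h0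
        have hsplit : ∑ i, p.2 i = (∑ i ∈ Finset.univ \ {0}, p.2 i) + p.2 0 :=
          Finset.sum_eq_sum_sdiff_singleton_add (Finset.mem_univ 0) _
        have hupd : ∑ i, Function.update p.2 0 (p.2 0 - 1) i
            = (p.2 0 - 1) + ∑ i ∈ Finset.univ \ {0}, p.2 i :=
          Finset.sum_update_of_mem (Finset.mem_univ 0) _ _
        have hnew : (∑ i, Function.update p.2 0 (p.2 0 - 1) i) + 1 = ∑ i, p.2 i := by omega
        have hmul : m * ((∑ i, Function.update p.2 0 (p.2 0 - 1) i) + 1)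
            = m * (∑ i, Function.update p.2 0 (p.2 0 - 1) i) + m := by ring
        rw [hnew] at hmul
        rw [Finset.mem_coe, mem_cntSet]
        dsimp only
        have hcond' : p.1 * n + m * ∑ i, Function.update p.2 0 (p.2 0 - 1) i = M - m := by
          omega
        refine ⟨⟨hk, fun i => ?_⟩, hcond'⟩
        have hle : Function.update p.2 0 (p.2 0 - 1) i
            ≤ ∑ x, Function.update p.2 0 (p.2 0 - 1) x :=
          Finset.single_le_sum (fun _ _ => Nat.zero_le _) (Finset.mem_univ i)
        have hmm : (∑ x, Function.update p.2 0 (p.2 0 - 1) x)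
            ≤ m * ∑ x, Function.update p.2 0 (p.2 0 - 1) x :=
          Nat.le_mul_of_pos_left _ hm
        omega
      · intro q hq
        rw [Finset.mem_coe, mem_cntSet] at hq
        obtain ⟨⟨hk, hb⟩, hcond⟩ := hq
        have hupd : ∑ i, Function.update q.2 0 (q.2 0 + 1) i
            = (q.2 0 + 1) + ∑ i ∈ Finset.univ \ {0}, q.2 i :=
          Finset.sum_update_of_mem (Finset.mem_univ 0) _ _
        have hsplit : ∑ i, q.2 i = (∑ i ∈ Finset.univ \ {0}, q.2 i) + q.2 0 :=
          Finset.sum_eq_sum_sdiff_singleton_add (Finset.mem_univ 0) _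
        have hnew : ∑ i, Function.update q.2 0 (q.2 0 + 1) i = (∑ i, q.2 i) + 1 := by omega
        have hmul : m * ((∑ i, q.2 i) + 1) = m * (∑ i, q.2 i) + m := by ring
        have hmul2 : m * (∑ i, Function.update q.2 0 (q.2 0 + 1) i)
            = m * (∑ i, q.2 i) + m := by rw [hnew]; exact hmul
        rw [Finset.mem_coe, Finset.mem_filter, mem_cntSet]
        dsimp only
        refine ⟨⟨⟨hk, fun i => ?_⟩, by omega⟩, ?_⟩
        · rcases eq_or_ne i 0 with rfl | hi
          · rw [Function.update_self]; have := hb 0; omega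
          · rw [Function.update_of_ne hi]; have := hb i; omega
        · simp [Function.update_self]
      · intro p hp
        rw [Finset.mem_coe, Finset.mem_filter] at hp
        obtain ⟨-, h0⟩ := hp
        refine Prod.ext rfl ?_
        dsimp only
        rw [Function.update_idem, Function.update_self]
        have : p.2 0 - 1 + 1 = p.2 0 := by omega
        rw [this, Function.update_eq_self]
      · intro q hq
        refine Prod.ext rfl ?_
        dsimp only
        rw [Function.update_idem, Function.update_self]
        simp
    · rw [Finset.card_eq_zero, Finset.eq_empty_iff_forall_notMem]
      intro p hp
      rw [Finset.mem_filter, mem_cntSet] at hp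
      obtain ⟨⟨⟨hk, hb⟩, hcond⟩, h0⟩ := hp
      have h1 : p.2 0 ≤ ∑ i, p.2 i :=
        Finset.single_le_sum (fun _ _ => Nat.zero_le _) (Finset.mem_univ 0)
      have h2 : ∑ i, p.2 i ≤ m * ∑ i, p.2 i := Nat.le_mul_of_pos_left _ hm
      have h3 : m * 1 ≤ m * ∑ i, p.2 i := Nat.mul_le_mul le_rfl (by omega)
      omega
private lemma cnt_zero {n m M : ℕ} (hn : 0 < n) :
    (cntSet n m 0 M).card = if n ∣ M ∧ M < n * m then 1 else 0 := by
  split_ifs with h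
  · obtain ⟨⟨c, rfl⟩, hlt⟩ := h
    rw [Finset.card_eq_one]
    refine ⟨(c, fun i => 0), ?_⟩
    ext p
    rw [mem_cntSet, Finset.mem_singleton]
    constructor
    · rintro ⟨⟨hk, -⟩, hcond⟩
      have hsum : ∑ i : Fin 0, p.2 i = 0 := by simp
      rw [hsum, Nat.mul_zero, Nat.add_zero] at hcond
      have h1 : n * p.1 = n * c := by rw [← hcond]; ring
      have h2 : p.1 = c := Nat.eq_of_mul_eq_mul_left hn h1
      exact Prod.ext h2 (Subsingleton.elim _ _)
    · rintro rfl
      have h1 : c < m := by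
        by_contra hcm
        have : n * m ≤ n * c := Nat.mul_le_mul le_rfl (by omega)
        omega
      refine ⟨⟨h1, fun i => Nat.zero_le _⟩, ?_⟩
      simp [mul_comm]
  · rw [Finset.card_eq_zero, Finset.eq_empty_iff_forall_notMem]
    intro p hp
    rw [mem_cntSet] at hp
    obtain ⟨⟨hk, -⟩, hcond⟩ := hp
    have hsum : ∑ i : Fin 0, p.2 i = 0 := by simp
    rw [hsum, Nat.mul_zero, Nat.add_zero] at hcond
    apply h
    constructor
    · exact ⟨p.1, by rw [← hcond]; ring⟩
    · have h1 : (p.1 + 1) * n ≤ m * n := Nat.mul_le_mul (by omega) le_rfl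
      have h2 : (p.1 + 1) * n = p.1 * n + n := by ring
      have h3 : m * n = n * m := mul_comm m n
      omega

private lemma e_identity (n m M : ℕ) (hn : 0 < n) (hm : 0 < m) :
    ((if n ∣ M ∧ M < n*m then (1:ℤ) else 0)
      - (if n ≤ M then (if n ∣ (M - n) ∧ (M - n) < n*m then (1:ℤ) else 0) else 0))
    = (if M = 0 then 1 else 0) - (if M = n*m then 1 else 0) := by
  by_cases h1 : n ∣ M
  · obtain ⟨c, rfl⟩ := h1
    by_cases hc : c = 0
    · subst hc
      have hpos : 0 < n * m := Nat.mul_pos hn hm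
      simp only [Nat.mul_zero]
      rw [if_pos ⟨dvd_zero n, hpos⟩, if_neg (by omega : ¬ n ≤ 0),
        if_neg (by omega : ¬ (0 = n * m))]
      norm_num
    · have hA : n * c = n * (c - 1) + n := by
        conv_lhs => rw [show c = (c - 1) + 1 from by omega]
        ring
      have hnc : n ≤ n * c := by omega
      have hsub : n * c - n = n * (c - 1) := by omega
      rw [if_pos hnc, hsub]
      have hdvd1 : n ∣ n * c := dvd_mul_right n c
      have hdvd2 : n ∣ n * (c - 1) := dvd_mul_right n _
      have heq : n * c = n * m ↔ c = m := by
        constructor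
        · exact fun h => Nat.eq_of_mul_eq_mul_left hn h
        · rintro rfl; rfl
      have hlt1 : n * c < n * m ↔ c < m := by
        constructor
        · intro h; by_contra hh
          have : n * m ≤ n * c := Nat.mul_le_mul le_rfl (by omega)
          omega
        · intro h
          have : n * (c + 1) ≤ n * m := Nat.mul_le_mul le_rfl (by omega)
          have h2 : n * (c + 1) = n * c + n := by ring
          omega
      have hlt2 : n * (c - 1) < n * m ↔ c - 1 < m := by
        constructor
        · intro h; by_contra hh
          have : n * m ≤ n * (c - 1) := Nat.mul_le_mul le_rfl (by omega)
          omega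
        · intro h
          have : n * (c - 1 + 1) ≤ n * m := Nat.mul_le_mul le_rfl (by omega)
          have h2 : n * (c - 1 + 1) = n * (c - 1) + n := by ring
          omega
      simp only [hdvd1, hdvd2, true_and, hlt1, hlt2, heq]
      have hne : ¬ (n * c = 0) := by omega
      rw [if_neg hne]
      split_ifs <;> omega
  · have h2 : ¬ (n ∣ M ∧ M < n * m) := fun hh => h1 hh.1
    rw [if_neg h2]
    have h3 : M ≠ 0 := by rintro rfl; exact h1 (dvd_zero n)
    have h4 : M ≠ n * m := by rintro rfl; exact h1 (dvd_mul_right n m)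
    rw [if_neg h3, if_neg h4]
    by_cases h5 : n ≤ M
    · have h6 : ¬ n ∣ M - n := by
        intro hd
        obtain ⟨c, hcc⟩ := hd
        refine h1 ⟨c + 1, ?_⟩
        have hx : n * (c + 1) = n * c + n := by ring
        omega
      rw [if_pos h5, if_neg (fun hh => h6 hh.1)]
    · rw [if_neg h5]

private lemma series_step (n m j : ℕ) (hm : 0 < m) :
    (PowerSeries.mk fun M => ((cntSet n m (j+1) M).card : ℤ)) * (1 - X ^ m)
      = PowerSeries.mk fun M => ((cntSet n m j M).card : ℤ) := by
  ext M
  rw [mul_sub, mul_one, map_sub, coeff_mk, PowerSeries.coeff_mul_X_pow', coeff_mk]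
  have h := cnt_peel (n := n) (m := m) (j := j) (M := M) hm
  rw [h]
  push_cast
  split_ifs with hM
  · rw [coeff_mk]; ring
  · rw [coeff_mk]; ring

private lemma series_pow (n m : ℕ) (hm : 0 < m) (j : ℕ) :
    (PowerSeries.mk fun M => ((cntSet n m j M).card : ℤ)) * (1 - X ^ m) ^ j
      = PowerSeries.mk fun M => ((cntSet n m 0 M).card : ℤ) := by
  induction j with
  | zero => simp
  | succ j ih =>
    rw [pow_succ, show (1 - X ^ m : PowerSeries ℤ) ^ j * (1 - X ^ m)
        = (1 - X ^ m) * (1 - X ^ m) ^ j from mul_comm _ _, ← mul_assoc,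
      series_step n m j hm, ih]

private lemma series_zero (n m : ℕ) (hn : 0 < n) (hm : 0 < m) :
    (PowerSeries.mk fun M => ((cntSet n m 0 M).card : ℤ)) * (1 - X ^ n)
      = 1 - X ^ (n * m) := by
  ext M
  rw [mul_sub, mul_one, map_sub, coeff_mk, PowerSeries.coeff_mul_X_pow', coeff_mk,
    map_sub, PowerSeries.coeff_one, PowerSeries.coeff_X_pow]
  rw [cnt_zero hn, cnt_zero hn]
  push_cast
  exact e_identity n m M hn hm

private lemma arith1 {c bb m x E M : ℕ} (h1 : c + bb = m) (h2 : x + E = M)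
    (h3 : c * x ≤ bb * E) : m * x ≤ bb * M := by
  have e1 : c * x + bb * x = m * x := by rw [← add_mul, h1]
  have e2 : bb * x + bb * E = bb * M := by rw [← mul_add, h2]
  omega

private lemma arith2 {c bb m x E M : ℕ} (h1 : c + bb = m) (h2 : x + E = M)
    (h3 : m * x ≤ bb * M) : c * x ≤ bb * E := by
  have e1 : c * x + bb * x = m * x := by rw [← add_mul, h1]
  have e2 : bb * x + bb * E = bb * M := by rw [← mul_add, h2]
  omega

/-- forward direction facts for the cone bijection -/
private lemma fwd {n b m M : ℕ} (hn : 2 ≤ n) (hb : 1 ≤ b) (hm1 : n * b = m + 1)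
    (hbm : b ≤ m) (l : Fin n → ℕ) (hsum : ∑ i, l i = M) (hc : ∀ j, m * l j ≤ b * M) :
    (∀ j, l j ≤ b * M / m) ∧ b * M % m < m ∧
      (b * (∑ j, (b * M / m - l j)) + b * M % m = b * M / m) ∧
      ((b * M % m) * n + m * (∑ j, (b * M / m - l j)) = M) ∧ b * M / m ≤ M := by
  have hm0 : 0 < m := by omega
  have hb0 : 0 < b := hb
  have f1 : m * (b * M / m) + b * M % m = b * M := Nat.div_add_mod _ _
  have f2 : b * M % m < m := Nat.mod_lt _ hm0
  have f3 : ∀ j, l j ≤ b * M / m := by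
    intro j
    by_contra hj
    have hj' : b * M / m + 1 ≤ l j := by omega
    have h4 : m * (b * M / m + 1) ≤ m * l j := Nat.mul_le_mul le_rfl hj'
    have h5 : m * (b * M / m + 1) = m * (b * M / m) + m := by ring
    have := hc j
    omega
  have f5 : (∑ j, (b * M / m - l j)) + M = n * (b * M / m) := by
    have h6 : ∑ j, ((b * M / m - l j) + l j) = ∑ _j : Fin n, b * M / m :=
      Finset.sum_congr rfl (fun i _ => by have := f3 i; omega)
    rw [Finset.sum_add_distrib, hsum, Finset.sum_const, Finset.card_univ,
      Fintype.card_fin, smul_eq_mul] at h6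
    exact h6
  have f6 : b * (∑ j, (b * M / m - l j)) + b * M % m = b * M / m := by
    have hb1 : b * ((∑ j, (b * M / m - l j)) + M) = b * (n * (b * M / m)) := by rw [f5]
    have hb2 : b * ((∑ j, (b * M / m - l j)) + M)
        = b * (∑ j, (b * M / m - l j)) + b * M := mul_add _ _ _
    have hb3 : b * (n * (b * M / m)) = (m + 1) * (b * M / m) := by
      rw [show b * (n * (b * M / m)) = (n * b) * (b * M / m) from by ring, hm1]
    have hb4 : (m + 1) * (b * M / m) = m * (b * M / m) + b * M / m := by ring
    omega
  refine ⟨f3, f2, f6, ?_, ?_⟩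
  · have q1 : b * ((b * M % m) * n) = m * (b * M % m) + b * M % m := by
      rw [show b * ((b * M % m) * n) = (n * b) * (b * M % m) from by ring, hm1]
      ring
    have q2 : b * (m * (∑ j, (b * M / m - l j)))
        = m * (b * (∑ j, (b * M / m - l j))) := by ring
    have q3 : m * (b * (∑ j, (b * M / m - l j))) + m * (b * M % m)
        = m * (b * M / m) := by rw [← mul_add, f6]
    have q4 : b * ((b * M % m) * n + m * (∑ j, (b * M / m - l j)))
        = b * ((b * M % m) * n) + b * (m * (∑ j, (b * M / m - l j))) := mul_add _ _ _
    have q5 : b * ((b * M % m) * n + m * (∑ j, (b * M / m - l j))) = b * M := by omega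
    exact Nat.eq_of_mul_eq_mul_left hb0 q5
  · calc b * M / m ≤ b * M / b := Nat.div_le_div_left hbm hb0
    _ = M := Nat.mul_div_cancel_left M hb0

/-- backward direction facts for the cone bijection -/
private lemma bwd {n b m M k : ℕ} (hn : 2 ≤ n) (hb : 1 ≤ b) (hm1 : n * b = m + 1)
    (hbm : b ≤ m) (t : Fin n → ℕ) (hk : k < m) (hcond : k * n + m * ∑ i, t i = M) :
    (∀ j, t j ≤ k + b * (∑ i, t i)) ∧
      (∑ j, (k + b * (∑ i, t i) - t j)) = M ∧
      (∀ j, m * (k + b * (∑ i, t i) - t j) ≤ b * M) ∧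
      (∀ j, k + b * (∑ i, t i) - t j ≤ M) ∧
      b * M % m = k ∧ b * M / m = k + b * (∑ i, t i) := by
  have hm0 : 0 < m := by omega
  have hb0 : 0 < b := hb
  have hn0 : 0 < n := by omega
  have g1 : ∀ j, t j ≤ ∑ i, t i := fun j =>
    Finset.single_le_sum (fun _ _ => Nat.zero_le _) (Finset.mem_univ j)
  have g2 : (∑ i, t i) ≤ b * (∑ i, t i) := Nat.le_mul_of_pos_left _ hb0
  have g3 : ∀ j, t j ≤ k + b * (∑ i, t i) := fun j => by have := g1 j; omega
  have gsum : (∑ j, (k + b * (∑ i, t i) - t j)) + (∑ i, t i)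
      = n * (k + b * (∑ i, t i)) := by
    have h6 : ∑ j, ((k + b * (∑ i, t i) - t j) + t j) = ∑ _j : Fin n, (k + b * (∑ i, t i)) :=
      Finset.sum_congr rfl (fun i _ => by have := g3 i; omega)
    rw [Finset.sum_add_distrib, Finset.sum_const, Finset.card_univ,
      Fintype.card_fin, smul_eq_mul] at h6
    exact h6
  have hx : n * (k + b * (∑ i, t i)) = n * k + (m + 1) * (∑ i, t i) := by
    rw [mul_add, show n * (b * (∑ i, t i)) = (n * b) * (∑ i, t i) from by ring, hm1]
  have hcomm : n * k = k * n := mul_comm n k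
  have hmp1 : (m + 1) * (∑ i, t i) = m * (∑ i, t i) + (∑ i, t i) := by ring
  have hsum : (∑ j, (k + b * (∑ i, t i) - t j)) = M := by omega
  have hbM : b * M = m * (k + b * (∑ i, t i)) + k := by
    have q0 : b * M = b * (k * n + m * ∑ i, t i) := by rw [hcond]
    have q1 : b * (k * n) = m * k + k := by
      rw [show b * (k * n) = (n * b) * k from by ring, hm1]; ring
    have q2 : b * (m * ∑ i, t i) = m * (b * ∑ i, t i) := by ring
    have q4 : b * (k * n + m * ∑ i, t i) = b * (k * n) + b * (m * ∑ i, t i) := mul_add _ _ _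
    have q5 : m * (k + b * ∑ i, t i) = m * k + m * (b * ∑ i, t i) := mul_add _ _ _
    omega
  refine ⟨g3, hsum, ?_, ?_, ?_, ?_⟩
  · intro j
    have h7 : k + b * (∑ i, t i) - t j ≤ k + b * (∑ i, t i) := by omega
    have h8 : m * (k + b * (∑ i, t i) - t j) ≤ m * (k + b * (∑ i, t i)) :=
      Nat.mul_le_mul le_rfl h7
    omega
  · intro j
    have h9 : k ≤ k * n := Nat.le_mul_of_pos_right _ hn0
    have h10 : b * (∑ i, t i) ≤ m * (∑ i, t i) := Nat.mul_le_mul hbm le_rfl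
    omega
  · rw [hbM, Nat.mul_add_mod]
    exact Nat.mod_eq_of_lt hk
  · rw [hbM, Nat.mul_add_div hm0, Nat.div_eq_of_lt hk, Nat.add_zero]

private lemma top_count (n b M : ℕ) (hn : 2 ≤ n) (hb : 1 ≤ b) :
    ((Fintype.piFinset fun _ : Fin n => Finset.range (M + 1)).filter
      (fun l => ∑ i, l i = M ∧ ∀ π : Equiv.Perm (Fin n),
        (n * b - b - 1) * l (π ⟨0, Nat.zero_lt_of_lt hn⟩) ≤
          b * ∑ i ∈ Finset.univ.erase (⟨0, Nat.zero_lt_of_lt hn⟩ : Fin n), l (π i))).card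
    = (cntSet n (n * b - 1) n M).card := by
  have hn0 : 0 < n := by omega
  have hnb2 : 2 ≤ n * b := le_trans hn (Nat.le_mul_of_pos_right n hb)
  have h2b : 2 * b ≤ n * b := Nat.mul_le_mul hn le_rfl
  have hm1 : n * b = (n * b - 1) + 1 := by omega
  have hm0 : 0 < n * b - 1 := by omega
  have hbm : b ≤ n * b - 1 := by omega
  have hcb : (n * b - b - 1) + b = n * b - 1 := by omega
  -- constraint equivalence
  have hcon : ∀ l : Fin n → ℕ, (∑ i, l i) = M →
      ((∀ π : Equiv.Perm (Fin n),
        (n * b - b - 1) * l (π ⟨0, Nat.zero_lt_of_lt hn⟩) ≤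
          b * ∑ i ∈ Finset.univ.erase (⟨0, Nat.zero_lt_of_lt hn⟩ : Fin n), l (π i)) ↔
       (∀ j, (n * b - 1) * l j ≤ b * M)) := by
    intro l hsum
    constructor
    · intro H j
      have hw := H (Equiv.swap (⟨0, Nat.zero_lt_of_lt hn⟩ : Fin n) j)
      rw [Equiv.swap_apply_left] at hw
      have htot : ∑ i, l ((Equiv.swap (⟨0, Nat.zero_lt_of_lt hn⟩ : Fin n) j) i) = M := by
        rw [Equiv.sum_comp]; exact hsum
      have her := Finset.add_sum_erase Finset.univ
        (fun i => l ((Equiv.swap (⟨0, Nat.zero_lt_of_lt hn⟩ : Fin n) j) i))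
        (Finset.mem_univ (⟨0, Nat.zero_lt_of_lt hn⟩ : Fin n))
      simp only [Equiv.swap_apply_left] at her
      rw [htot] at her
      exact arith1 hcb her hw
    · intro H π
      have htot : ∑ i, l (π i) = M := by rw [Equiv.sum_comp]; exact hsum
      have her := Finset.add_sum_erase Finset.univ (fun i => l (π i))
        (Finset.mem_univ (⟨0, Nat.zero_lt_of_lt hn⟩ : Fin n))
      rw [htot] at her
      exact arith2 hcb her (H (π ⟨0, Nat.zero_lt_of_lt hn⟩))
  apply Finset.card_nbij'
    (i := fun l => (b * M % (n * b - 1), fun j => b * M / (n * b - 1) - l j))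
    (j := fun p => fun j => p.1 + b * (∑ i, p.2 i) - p.2 j)
  · -- forward membership
    intro l hl
    rw [Finset.mem_coe, Finset.mem_filter, Fintype.mem_piFinset] at hl
    obtain ⟨hbnd, hsum, hπ⟩ := hl
    have hc : ∀ j, (n * b - 1) * l j ≤ b * M := (hcon l hsum).mp hπ
    obtain ⟨f3, f2, f6, f7, f8⟩ := fwd hn hb hm1 hbm l hsum hc
    rw [Finset.mem_coe, mem_cntSet]
    dsimp only
    exact ⟨⟨f2, fun i => by have := f3 i; omega⟩, f7⟩
  · -- backward membership
    intro p hp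
    rw [Finset.mem_coe, mem_cntSet] at hp
    obtain ⟨⟨hk, hbnd⟩, hcond⟩ := hp
    obtain ⟨g3, gsum, gcon, gle, gmod, gdiv⟩ := bwd hn hb hm1 hbm p.2 hk hcond
    rw [Finset.mem_coe, Finset.mem_filter, Fintype.mem_piFinset]
    refine ⟨fun i => Finset.mem_range.mpr (by have := gle i; dsimp only; omega), gsum, ?_⟩
    exact (hcon _ gsum).mpr (fun j => gcon j)
  · -- left inverse
    intro l hl
    rw [Finset.mem_coe, Finset.mem_filter, Fintype.mem_piFinset] at hl
    obtain ⟨hbnd, hsum, hπ⟩ := hl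
    have hc : ∀ j, (n * b - 1) * l j ≤ b * M := (hcon l hsum).mp hπ
    obtain ⟨f3, f2, f6, f7, f8⟩ := fwd hn hb hm1 hbm l hsum hc
    funext j
    dsimp only
    have := f3 j
    omega
  · -- right inverse
    intro p hp
    rw [Finset.mem_coe, mem_cntSet] at hp
    obtain ⟨⟨hk, hbnd⟩, hcond⟩ := hp
    obtain ⟨g3, gsum, gcon, gle, gmod, gdiv⟩ := bwd hn hb hm1 hbm p.2 hk hcond
    have hfst : b * M % (n * b - 1) = p.1 := gmod
    refine Prod.ext hfst ?_
    funext j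
    dsimp only
    rw [gdiv]
    have := g3 j
    omega


/-- Example 2: for `n ≥ 2`, `b ≥ 1`, the generating function `∑_λ q^{λ₁+⋯+λₙ}` over
`λ ∈ ℤ_{≥0}^n` with `b(λ_{π(2)}+⋯+λ_{π(n)}) ≥ (nb-b-1)λ_{π(1)}` for all `π ∈ Sₙ`
equals `(1 - q^{n(nb-1)}) / ((1-q^n)(1-q^{nb-1})^n)`; stated with denominators cleared,
the coefficient of `q^M` being the number of such `λ` with `|λ| = M`. -/
theorem stmt_12 (n b : ℕ) (hn : 2 ≤ n) (hb : 1 ≤ b) :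
    (PowerSeries.mk fun M =>
        ((((Fintype.piFinset fun _ : Fin n => Finset.range (M + 1)).filter
          (fun l => ∑ i, l i = M ∧ ∀ π : Equiv.Perm (Fin n),
            (n * b - b - 1) * l (π ⟨0, by omega⟩) ≤
              b * ∑ i ∈ Finset.univ.erase (⟨0, by omega⟩ : Fin n), l (π i))).card : ℤ))) *
      ((1 - (PowerSeries.X : PowerSeries ℤ) ^ n) * (1 - PowerSeries.X ^ (n * b - 1)) ^ n) =
    1 - (PowerSeries.X : PowerSeries ℤ) ^ (n * (n * b - 1)) := by
  have hn0 : 0 < n := by omega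
  have hnb2 : 2 ≤ n * b := le_trans hn (Nat.le_mul_of_pos_right n hb)
  have hm0 : 0 < n * b - 1 := by omega
  have hP : (PowerSeries.mk fun M =>
        ((((Fintype.piFinset fun _ : Fin n => Finset.range (M + 1)).filter
          (fun l => ∑ i, l i = M ∧ ∀ π : Equiv.Perm (Fin n),
            (n * b - b - 1) * l (π ⟨0, by omega⟩) ≤
              b * ∑ i ∈ Finset.univ.erase (⟨0, by omega⟩ : Fin n), l (π i))).card : ℤ)))
      = PowerSeries.mk fun M => ((cntSet n (n * b - 1) n M).card : ℤ) := by
    ext M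
    rw [coeff_mk, coeff_mk]
    exact_mod_cast top_count n b M hn hb
  rw [hP, show (1 - (X : PowerSeries ℤ) ^ n) * (1 - X ^ (n * b - 1)) ^ n
      = (1 - X ^ (n * b - 1)) ^ n * (1 - X ^ n) from mul_comm _ _, ← mul_assoc,
    series_pow n (n * b - 1) hm0 n, series_zero n (n * b - 1) hn0 hm0]
end
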